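/- arXiv:2010.12952 — 4 statements merged into one kernel-verified Lean document; each statement's English description precedes it below -/
import Mathlib

section
/- Harnack-type inequality under hypothesis (H2) (Theorem 1.1, one-dimensional case). Let d = 1 and assume in addition that a is locally Lipschitz and that there exists a nondecreasing function γ : (0,∞) → (0,∞) with γ(r) ≥ r for all r > 0 such that supp ν(x,·) ⊆ B_{γ(R)} for every R > 0 and every x ∈ B_R. Then for every R > 0 there exists a constant C(R) > 0 (independent of u) such that every nonnegative continuous u : ℝ → ℝ which is twice continuously differentiable on B_{2γ̆} and satisfies I u = 0 pointwise on B_{2γ̆}, where γ̆ := γ(2R + γ(2R)), satisfies sup_{B_R} u ≤ C(R) · u(0). -/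
open MeasureTheory Metric Set
open Filter Topology

noncomputable section

/-- The nonlocal integro-differential operator `I`. -/
def Iop (d : ℕ) (a : EuclideanSpace ℝ (Fin d) → Matrix (Fin d) (Fin d) ℝ)
    (b : EuclideanSpace ℝ (Fin d) → EuclideanSpace ℝ (Fin d))
    (c : EuclideanSpace ℝ (Fin d) → ℝ)
    (ν : EuclideanSpace ℝ (Fin d) → Measure (EuclideanSpace ℝ (Fin d)))
    (f : EuclideanSpace ℝ (Fin d) → ℝ) (x : EuclideanSpace ℝ (Fin d)) : ℝ :=
  (∑ i, ∑ j, a x i j *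
      fderiv ℝ (fun y => fderiv ℝ f y (EuclideanSpace.single j (1:ℝ))) x
        (EuclideanSpace.single i (1:ℝ)))
    + fderiv ℝ f x (b x) + c x * f x + ∫ z, (f (x + z) - f x) ∂(ν x)

/-- Standing structural assumptions (Assumption 1.1 of the paper). -/
structure StandardAssumptions (d : ℕ)
    (a : EuclideanSpace ℝ (Fin d) → Matrix (Fin d) (Fin d) ℝ)
    (b : EuclideanSpace ℝ (Fin d) → EuclideanSpace ℝ (Fin d))
    (c : EuclideanSpace ℝ (Fin d) → ℝ)
    (ν : EuclideanSpace ℝ (Fin d) → Measure (EuclideanSpace ℝ (Fin d))) : Prop where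
  dim_pos : 1 ≤ d
  a_symm : ∀ x, (a x).IsSymm
  a_cont : ∀ i j, Continuous fun x => a x i j
  a_elliptic : ∀ K : Set (EuclideanSpace ℝ (Fin d)), IsCompact K → ∃ κ > (0:ℝ),
    ∀ x ∈ K, ∀ ξ : EuclideanSpace ℝ (Fin d),
      κ * ‖ξ‖ ^ 2 ≤ ∑ i, ∑ j, ξ i * a x i j * ξ j ∧
      ∑ i, ∑ j, ξ i * a x i j * ξ j ≤ κ⁻¹ * ‖ξ‖ ^ 2
  b_meas : Measurable b
  c_meas : Measurable c
  b_locBdd : ∀ K : Set (EuclideanSpace ℝ (Fin d)), IsCompact K → ∃ M, ∀ x ∈ K, ‖b x‖ ≤ M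
  c_locBdd : ∀ K : Set (EuclideanSpace ℝ (Fin d)), IsCompact K → ∃ M, ∀ x ∈ K, |c x| ≤ M
  nu_fin : ∀ x, IsFiniteMeasure (ν x)
  nu_locBdd : ∀ K : Set (EuclideanSpace ℝ (Fin d)), IsCompact K →
    ∃ M : ℝ, ∀ x ∈ K, (ν x Set.univ).toReal ≤ M
  nu_locSupp : ∀ K : Set (EuclideanSpace ℝ (Fin d)), IsCompact K →
    ∃ K₁ : Set (EuclideanSpace ℝ (Fin d)), IsCompact K₁ ∧ ∀ x ∈ K, ν x K₁ᶜ = 0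

/-- Generalized principal eigenvalue on all of `ℝ^d`. -/
def lam1 (d : ℕ) (L : (EuclideanSpace ℝ (Fin d) → ℝ) → EuclideanSpace ℝ (Fin d) → ℝ) : EReal :=
  sSup (Real.toEReal '' {l : ℝ | ∃ φ : EuclideanSpace ℝ (Fin d) → ℝ,
    ContDiff ℝ 2 φ ∧ (∀ x, 0 < φ x) ∧ ∀ x, L φ x + l * φ x ≤ 0})

/-- Dirichlet principal eigenvalue on an open set `D`. -/
def lamD (d : ℕ) (L : (EuclideanSpace ℝ (Fin d) → ℝ) → EuclideanSpace ℝ (Fin d) → ℝ)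
    (D : Set (EuclideanSpace ℝ (Fin d))) : EReal :=
  sSup (Real.toEReal '' {l : ℝ | ∃ φ : EuclideanSpace ℝ (Fin d) → ℝ,
    Continuous φ ∧ (∀ x, 0 ≤ φ x) ∧ ContDiffOn ℝ 2 φ D ∧ (∀ x ∈ D, 0 < φ x) ∧
    ∀ x ∈ D, L φ x + l * φ x ≤ 0})

/-- The eigenvalue `λ'₁`. -/
def lamP1 (d : ℕ) (L : (EuclideanSpace ℝ (Fin d) → ℝ) → EuclideanSpace ℝ (Fin d) → ℝ) : EReal :=
  sInf (Real.toEReal '' {l : ℝ | ∃ φ : EuclideanSpace ℝ (Fin d) → ℝ,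
    ContDiff ℝ 2 φ ∧ (∀ x, 0 < φ x) ∧ BddAbove (Set.range φ) ∧ ∀ x, 0 ≤ L φ x + l * φ x})

/-- The eigenvalue `λ''₁`. -/
def lamPP1 (d : ℕ) (L : (EuclideanSpace ℝ (Fin d) → ℝ) → EuclideanSpace ℝ (Fin d) → ℝ) : EReal :=
  sSup (Real.toEReal '' {l : ℝ | ∃ φ : EuclideanSpace ℝ (Fin d) → ℝ,
    ContDiff ℝ 2 φ ∧ (∃ δ > (0:ℝ), ∀ x, δ ≤ φ x) ∧ ∀ x, L φ x + l * φ x ≤ 0})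

/-- The eigenvalue `λ''(L, D)` for an open set `D`. -/
def lamPPD (d : ℕ) (L : (EuclideanSpace ℝ (Fin d) → ℝ) → EuclideanSpace ℝ (Fin d) → ℝ)
    (D : Set (EuclideanSpace ℝ (Fin d))) : EReal :=
  sSup (Real.toEReal '' {l : ℝ | ∃ φ : EuclideanSpace ℝ (Fin d) → ℝ,
    Continuous φ ∧ ContDiffOn ℝ 2 φ D ∧ (∃ δ > (0:ℝ), ∀ x, δ ≤ φ x) ∧
    ∀ x ∈ D, L φ x + l * φ x ≤ 0})

/-- `L` satisfies the maximum principle on `ℝ^d`. -/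
def MaxPrinciple (d : ℕ)
    (L : (EuclideanSpace ℝ (Fin d) → ℝ) → EuclideanSpace ℝ (Fin d) → ℝ) : Prop :=
  ∀ u : EuclideanSpace ℝ (Fin d) → ℝ, ContDiff ℝ 2 u → (∀ x, 0 ≤ L u x) →
    BddAbove (Set.range u) → ∀ x, u x ≤ 0

/-- Growth condition (E_growth). -/
def EGrowth (d : ℕ) (a : EuclideanSpace ℝ (Fin d) → Matrix (Fin d) (Fin d) ℝ)
    (b : EuclideanSpace ℝ (Fin d) → EuclideanSpace ℝ (Fin d))
    (c : EuclideanSpace ℝ (Fin d) → ℝ) : Prop :=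
  (∃ M, ∀ x, c x ≤ M) ∧
  (∃ M, ∀ x, ‖(Matrix.toEuclideanCLM (𝕜 := ℝ) (a x) :
      EuclideanSpace ℝ (Fin d) →L[ℝ] EuclideanSpace ℝ (Fin d))‖ ≤ M) ∧
  (∃ M, ∀ x : EuclideanSpace ℝ (Fin d), x ≠ 0 → (inner ℝ (b x) x : ℝ) / ‖x‖ ≤ M)

/-- Growth condition (P_growth). -/
def PGrowth (d : ℕ) (a : EuclideanSpace ℝ (Fin d) → Matrix (Fin d) (Fin d) ℝ)
    (b : EuclideanSpace ℝ (Fin d) → EuclideanSpace ℝ (Fin d))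
    (c : EuclideanSpace ℝ (Fin d) → ℝ) : Prop :=
  (∃ M, ∀ x, c x ≤ M) ∧
  (∃ M R, ∀ x : EuclideanSpace ℝ (Fin d), R ≤ ‖x‖ →
    ‖(Matrix.toEuclideanCLM (𝕜 := ℝ) (a x) :
      EuclideanSpace ℝ (Fin d) →L[ℝ] EuclideanSpace ℝ (Fin d))‖ / ‖x‖ ^ 2 ≤ M) ∧
  (∃ M R, ∀ x : EuclideanSpace ℝ (Fin d), R ≤ ‖x‖ → (inner ℝ (b x) x : ℝ) / ‖x‖ ^ 2 ≤ M)



section HarnackAux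


/-- Second derivative test at an interior local max. -/
lemma second_deriv_test_aux {w w' : ℝ → ℝ} {m t : ℝ} {s : Set ℝ}
    (hs : IsOpen s) (hts : t ∈ s)
    (hd : ∀ y ∈ s, HasDerivAt w (w' y) y)
    (hd2 : HasDerivAt w' m t)
    (hmax : IsLocalMax w t) : m ≤ 0 := by
  by_contra hm
  push_neg at hm
  have hw't : w' t = 0 := by
    have h0 := hmax.deriv_eq_zero
    rwa [(hd t hts).deriv] at h0
  have hslope : Tendsto (slope w' t) (𝓝[≠] t) (𝓝 m) :=
    hasDerivAt_iff_tendsto_slope.mp hd2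
  have hpos : ∀ᶠ y in 𝓝[≠] t, 0 < slope w' t y :=
    hslope.eventually (eventually_gt_nhds hm)
  have hpos' : ∀ᶠ y in 𝓝 t, y ≠ t → 0 < slope w' t y := by
    rwa [eventually_nhdsWithin_iff] at hpos
  have hsmem : ∀ᶠ y in 𝓝 t, y ∈ s := hs.eventually_mem hts
  have hloc : ∀ᶠ y in 𝓝 t, w y ≤ w t := hmax
  have hall : ∀ᶠ y in 𝓝 t, (y ≠ t → 0 < slope w' t y) ∧ y ∈ s ∧ w y ≤ w t :=
    hpos'.and (hsmem.and hloc)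
  rw [Metric.eventually_nhds_iff] at hall
  obtain ⟨ε, hε, hεp⟩ := hall
  set y₀ := t + ε / 2 with hy₀
  have hdy : ∀ y ∈ Icc t y₀, dist y t < ε := by
    intro y hy
    rw [Real.dist_eq, abs_lt]
    constructor <;> [linarith [hy.1]; skip]
    have := hy.2
    simp only [hy₀] at this ⊢
    linarith
  have hmono : StrictMonoOn w (Icc t y₀) := by
    apply strictMonoOn_of_deriv_pos (convex_Icc _ _)
    · intro y hy
      exact (hd y (hεp (hdy y hy)).2.1).continuousAt.continuousWithinAt
    · intro y hy
      rw [interior_Icc] at hy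
      have hy' : y ∈ Icc t y₀ := Ioo_subset_Icc_self hy
      have hdlt := hdy y hy'
      rw [(hd y (hεp hdlt).2.1).deriv]
      have hsl := (hεp hdlt).1 (ne_of_gt hy.1)
      rw [slope_def_field, hw't, sub_zero] at hsl
      have hyt : 0 < y - t := sub_pos.mpr hy.1
      have := mul_pos hsl hyt
      rwa [div_mul_cancel₀] at this
      exact ne_of_gt hyt
  have hty₀ : t < y₀ := by simp only [hy₀]; linarith
  have h1 : w t < w y₀ := hmono (left_mem_Icc.mpr hty₀.le) (right_mem_Icc.mpr hty₀.le) hty₀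
  have h2 : w y₀ ≤ w t := (hεp (hdy y₀ (right_mem_Icc.mpr hty₀.le))).2.2
  linarith

/-- Comparison principle on an interval, zeroth-order coefficient `-M ≤ 0`. -/
lemma comparison_aux {A B : ℝ → ℝ} {M : ℝ} (hM : 0 ≤ M) {α β : ℝ} (hαβ : α < β)
    {s : Set ℝ} (hs : IsOpen s) (hsub : Icc α β ⊆ s)
    {U U' U'' ψ ψ' ψ'' : ℝ → ℝ}
    (hU1 : ∀ t ∈ s, HasDerivAt U (U' t) t) (hU2 : ∀ t ∈ s, HasDerivAt U' (U'' t) t)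
    (hψ1 : ∀ t ∈ s, HasDerivAt ψ (ψ' t) t) (hψ2 : ∀ t ∈ s, HasDerivAt ψ' (ψ'' t) t)
    (hApos : ∀ t ∈ Ioo α β, 0 ≤ A t)
    (hLU : ∀ t ∈ Ioo α β, A t * U'' t + B t * U' t - M * U t ≤ 0)
    (hLψ : ∀ t ∈ Ioo α β, 0 < A t * ψ'' t + B t * ψ' t - M * ψ t)
    (hα : ψ α ≤ U α) (hβ : ψ β ≤ U β) :
    ∀ t ∈ Icc α β, ψ t ≤ U t := by
  by_contra h
  push_neg at h
  obtain ⟨t₀, ht₀, hgt⟩ := h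
  set w : ℝ → ℝ := fun t => ψ t - U t with hw
  have hwd : ∀ y ∈ s, HasDerivAt w (ψ' y - U' y) y :=
    fun y hy => (hψ1 y hy).sub (hU1 y hy)
  have hwc : ContinuousOn w (Icc α β) := fun t ht =>
    (hwd t (hsub ht)).continuousAt.continuousWithinAt
  obtain ⟨tm, htm, htmax⟩ := isCompact_Icc.exists_isMaxOn ⟨t₀, ht₀⟩ hwc
  have hwpos : 0 < w tm := lt_of_lt_of_le (sub_pos.mpr hgt) (htmax ht₀)
  have htIoo : tm ∈ Ioo α β := by
    rcases eq_or_lt_of_le htm.1 with h1 | h1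
    · exfalso; have : w tm = ψ α - U α := by rw [← h1]
      rw [this] at hwpos; linarith
    rcases eq_or_lt_of_le htm.2 with h2 | h2
    · exfalso; have : w tm = ψ β - U β := by rw [h2]
      rw [this] at hwpos; linarith
    exact ⟨h1, h2⟩
  have hloc : IsLocalMax w tm := htmax.isLocalMax (Icc_mem_nhds htIoo.1 htIoo.2)
  have hder0 : ψ' tm - U' tm = 0 := by
    have h0 := hloc.deriv_eq_zero
    rwa [(hwd tm (hsub htm)).deriv] at h0
  have h2nd : ψ'' tm - U'' tm ≤ 0 :=
    second_deriv_test_aux hs (hsub htm) hwd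
      ((hψ2 tm (hsub htm)).sub (hU2 tm (hsub htm))) hloc
  have e1 := hLU tm htIoo
  have e2 := hLψ tm htIoo
  have hA := hApos tm htIoo
  have k1 : A tm * (ψ'' tm - U'' tm) ≤ 0 := mul_nonpos_of_nonneg_of_nonpos hA h2nd
  have k2 : B tm * (ψ' tm - U' tm) = 0 := by rw [hder0, mul_zero]
  have k3 : 0 ≤ M * w tm := mul_nonneg hM hwpos.le
  have hww : w tm = ψ tm - U tm := rfl
  nlinarith [k1, k2, k3, e1, e2]

lemma barrier_pos {κ M l At Bt c0 E : ℝ} (hκ : 0 < κ) (hM : 0 ≤ M) (hc0 : 0 < c0)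
    (hE : 1 ≤ E) (hA : κ ≤ At) (hB : |Bt| ≤ M)
    (hkey : 2 ≤ κ*l*l - M*l - M) (hl0 : 0 < l) :
    0 < At * (c0*l*l*E) + Bt * (c0*l*E) - M * (c0*E - c0) := by
  have hEpos : 0 < E := lt_of_lt_of_le one_pos hE
  obtain ⟨hB1, hB2⟩ := abs_le.mp hB
  have h1 : κ * (c0*l*l*E) ≤ At * (c0*l*l*E) :=
    mul_le_mul_of_nonneg_right hA (by positivity)
  have h2 : -M * (c0*l*E) ≤ Bt * (c0*l*E) :=
    mul_le_mul_of_nonneg_right hB1 (by positivity)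
  have h3 : 0 ≤ M * c0 := by positivity
  have h4 : 2 * (c0 * E) ≤ (κ*l*l - M*l - M) * (c0 * E) :=
    mul_le_mul_of_nonneg_right hkey (by positivity)
  nlinarith [mul_pos hc0 hEpos]

/-- One-sided Harnack estimate via an exponential barrier. -/
lemma harnack_half {A B : ℝ → ℝ} {κ M R : ℝ} (hκ : 0 < κ) (hM : 0 ≤ M) (hR : 0 < R)
    {s : Set ℝ} (hs : IsOpen s) (hsub : Icc (-(2*R)) (2*R) ⊆ s)
    {U U' U'' : ℝ → ℝ}
    (hU1 : ∀ t ∈ s, HasDerivAt U (U' t) t) (hU2 : ∀ t ∈ s, HasDerivAt U' (U'' t) t)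
    (hU0 : ∀ t, 0 ≤ U t)
    (hA : ∀ t ∈ Icc (-(2*R)) (2*R), κ ≤ A t)
    (hB : ∀ t ∈ Icc (-(2*R)) (2*R), |B t| ≤ M)
    (hIneq : ∀ t ∈ Icc (-(2*R)) (2*R), A t * U'' t + B t * U' t - M * U t ≤ 0)
    {x : ℝ} (hx0 : 0 < x) (hxR : x ≤ R) :
    U x ≤ (2 * (Real.exp (((2*M+2)/κ + 1) * (4*R)) - 1) /
      (Real.exp (((2*M+2)/κ + 1) * (2*R)) - 1)) * U 0 := by
  obtain ⟨l, hl⟩ : ∃ l : ℝ, l = (2*M+2)/κ + 1 := ⟨_, rfl⟩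
  rw [← hl]
  have hl1 : 1 ≤ l := by
    have h0 : 0 < (2*M+2)/κ := by positivity
    rw [hl]; linarith
  have hl0 : 0 < l := lt_of_lt_of_le one_pos hl1
  have hκl : κ * l = 2*M + 2 + κ := by
    rw [hl]; field_simp
  have hkey : 2 ≤ κ * l * l - M * l - M := by nlinarith
  obtain ⟨D1, hD1⟩ : ∃ D1 : ℝ, D1 = Real.exp (l * (2*R)) - 1 := ⟨_, rfl⟩
  obtain ⟨D3, hD3⟩ : ∃ D3 : ℝ, D3 = Real.exp (l * (4*R)) - 1 := ⟨_, rfl⟩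
  rw [← hD1, ← hD3]
  have hD1pos : 0 < D1 := by
    rw [hD1, sub_pos]
    exact Real.one_lt_exp_iff.mpr (by positivity)
  have hD13 : D1 ≤ D3 := by
    rw [hD1, hD3, sub_le_sub_iff_right]
    exact Real.exp_le_exp.mpr (by nlinarith)
  have hD3pos : 0 < D3 := lt_of_lt_of_le hD1pos hD13
  -- trivial case
  rcases eq_or_lt_of_le (hU0 x) with hUx | hUx
  · rw [← hUx]
    have hC : (0:ℝ) ≤ 2 * D3 / D1 := by positivity
    exact mul_nonneg hC (hU0 0)
  -- continuity: get δ
  have hxIcc : x ∈ Icc (-(2*R)) (2*R) := ⟨by linarith, by linarith⟩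
  have hcx : ContinuousAt U x := (hU1 x (hsub hxIcc)).continuousAt
  have hev : ∀ᶠ y in 𝓝 x, U x / 2 < U y :=
    hcx.eventually (eventually_gt_nhds (by linarith))
  rw [Metric.eventually_nhds_iff] at hev
  obtain ⟨ε, hε, hεp⟩ := hev
  obtain ⟨δ, hδ⟩ : ∃ δ : ℝ, δ = min (ε/2) (x/2) := ⟨_, rfl⟩
  have hδε : δ ≤ ε/2 := hδ ▸ min_le_left _ _
  have hδx2 : δ ≤ x/2 := hδ ▸ min_le_right _ _
  have hδ0 : 0 < δ := by rw [hδ, lt_min_iff]; constructor <;> linarith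
  obtain ⟨β, hβ⟩ : ∃ β : ℝ, β = x - δ := ⟨_, rfl⟩
  have hβ0 : 0 < β := by rw [hβ]; linarith
  have hβR : β < R := by rw [hβ]; linarith
  have hUβ : U x / 2 ≤ U β := by
    have hd : dist β x < ε := by
      rw [Real.dist_eq, hβ, show x - δ - x = -δ by ring, abs_neg, abs_of_pos hδ0]
      linarith
    exact (hεp hd).le
  -- barrier
  obtain ⟨D2, hD2⟩ : ∃ D2 : ℝ, D2 = Real.exp (l * β + l * (2*R)) - 1 := ⟨_, rfl⟩
  have hD2pos : 0 < D2 := by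
    rw [hD2, sub_pos]
    exact Real.one_lt_exp_iff.mpr (by positivity)
  obtain ⟨c0, hc0⟩ : ∃ c0 : ℝ, c0 = U x / (2 * D2) := ⟨_, rfl⟩
  have hc0pos : 0 < c0 := by rw [hc0]; positivity
  obtain ⟨ψ, hψ⟩ : ∃ ψ : ℝ → ℝ, ψ = fun t => c0 * Real.exp (l * t + l * (2*R)) - c0 :=
    ⟨_, rfl⟩
  obtain ⟨Dψ, hDψ⟩ : ∃ Dψ : ℝ → ℝ, Dψ = fun t => c0 * l * Real.exp (l * t + l * (2*R)) :=
    ⟨_, rfl⟩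
  obtain ⟨DDψ, hDDψ⟩ : ∃ DDψ : ℝ → ℝ,
      DDψ = fun t => c0 * l * l * Real.exp (l * t + l * (2*R)) := ⟨_, rfl⟩
  have hlin : ∀ t : ℝ, HasDerivAt (fun y : ℝ => l * y + l * (2*R)) l t := by
    intro t
    simpa using ((hasDerivAt_id t).const_mul l).add_const (l * (2*R))
  have hψ1 : ∀ t ∈ s, HasDerivAt ψ (Dψ t) t := by
    intro t _
    rw [hψ, hDψ]
    have h := (((hlin t).exp).const_mul c0).sub_const c0
    exact h.congr_deriv (by beta_reduce; ring)
  have hψ2 : ∀ t ∈ s, HasDerivAt Dψ (DDψ t) t := by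
    intro t _
    rw [hDψ, hDDψ]
    have h := ((hlin t).exp).const_mul (c0 * l)
    exact h.congr_deriv (by beta_reduce; ring)
  have hsubβ : Icc (-(2*R)) β ⊆ Icc (-(2*R)) (2*R) :=
    Icc_subset_Icc le_rfl (by linarith)
  have hcomp := comparison_aux (A := A) (B := B) hM
    (show -(2*R) < β by linarith) hs (hsubβ.trans hsub)
    hU1 hU2 hψ1 hψ2
    (fun t ht => le_trans hκ.le (hA t (hsubβ (Ioo_subset_Icc_self ht))))
    (fun t ht => hIneq t (hsubβ (Ioo_subset_Icc_self ht)))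
    ?_ ?_ ?_
  · -- conclude
    have h00 : (0:ℝ) ∈ Icc (-(2*R)) β := ⟨by linarith, hβ0.le⟩
    have hψ0 := hcomp 0 h00
    have hψ0v : ψ 0 = c0 * D1 := by
      rw [hψ, hD1]; simp only [mul_zero, zero_add]; ring
    rw [hψ0v] at hψ0
    have hUx2 : U x = 2 * c0 * D2 := by
      rw [hc0]; field_simp
    have hD23 : D2 ≤ D3 := by
      rw [hD2, hD3, sub_le_sub_iff_right]
      exact Real.exp_le_exp.mpr (by nlinarith)
    rw [div_mul_eq_mul_div, le_div_iff₀ hD1pos]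
    have e2 : 2 * c0 * D2 * D1 ≤ 2 * D3 * (c0 * D1) := by
      nlinarith [mul_le_mul_of_nonneg_right hD23 (mul_pos hc0pos hD1pos).le]
    have e3 : 2 * D3 * (c0 * D1) ≤ 2 * D3 * U 0 :=
      mul_le_mul_of_nonneg_left hψ0 (by positivity)
    calc U x * D1 = 2 * c0 * D2 * D1 := by rw [hUx2]
      _ ≤ 2 * D3 * U 0 := le_trans e2 e3
  · -- barrier is a strict subsolution
    intro t ht
    have htIcc : t ∈ Icc (-(2*R)) (2*R) := hsubβ (Ioo_subset_Icc_self ht)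
    have hAt := hA t htIcc
    have hBt := hB t htIcc
    have hE1 : 1 ≤ Real.exp (l * t + l * (2*R)) := by
      apply Real.one_le_exp
      nlinarith [mul_nonneg hl0.le (show (0:ℝ) ≤ t + 2*R by linarith [ht.1])]
    have h := barrier_pos (E := Real.exp (l * t + l * (2*R)))
      hκ hM hc0pos hE1 hAt hBt hkey hl0
    rw [hψ, hDψ, hDDψ]
    exact h
  · -- left endpoint
    have hz : ψ (-(2*R)) = 0 := by
      rw [hψ]
      show c0 * Real.exp (l * (-(2*R)) + l * (2*R)) - c0 = 0
      rw [show l * (-(2*R)) + l * (2*R) = 0 by ring]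
      simp
    rw [hz]; exact hU0 _
  · -- right endpoint
    have hne : D2 ≠ 0 := ne_of_gt hD2pos
    have hz : ψ β = U x / 2 := by
      rw [hψ]
      show c0 * Real.exp (l * β + l * (2*R)) - c0 = U x / 2
      have h1 : c0 * Real.exp (l * β + l * (2*R)) - c0 = c0 * D2 := by
        rw [hD2]; ring
      rw [h1, hc0]
      field_simp
    rw [hz]; exact hUβ

/-- Two-sided Harnack-type estimate on `[-R, R]`. -/
lemma harnack_core {A B : ℝ → ℝ} {κ M R : ℝ} (hκ : 0 < κ) (hM : 0 ≤ M) (hR : 0 < R)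
    {s : Set ℝ} (hs : IsOpen s) (hsub : Icc (-(2*R)) (2*R) ⊆ s)
    {U U' U'' : ℝ → ℝ}
    (hU1 : ∀ t ∈ s, HasDerivAt U (U' t) t) (hU2 : ∀ t ∈ s, HasDerivAt U' (U'' t) t)
    (hU0 : ∀ t, 0 ≤ U t)
    (hA : ∀ t ∈ Icc (-(2*R)) (2*R), κ ≤ A t)
    (hB : ∀ t ∈ Icc (-(2*R)) (2*R), |B t| ≤ M)
    (hIneq : ∀ t ∈ Icc (-(2*R)) (2*R), A t * U'' t + B t * U' t - M * U t ≤ 0) :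
    ∀ x ∈ Icc (-R) R,
    U x ≤ (2 * (Real.exp (((2*M+2)/κ + 1) * (4*R)) - 1) /
      (Real.exp (((2*M+2)/κ + 1) * (2*R)) - 1)) * U 0 := by
  intro x hx
  obtain ⟨l, hl⟩ : ∃ l : ℝ, l = (2*M+2)/κ + 1 := ⟨_, rfl⟩
  have hl0 : 0 < l := by
    have : 0 < (2*M+2)/κ := by positivity
    rw [hl]; linarith
  have hD1pos : 0 < Real.exp (l * (2*R)) - 1 := by
    rw [sub_pos]; exact Real.one_lt_exp_iff.mpr (by positivity)
  have hD13 : Real.exp (l * (2*R)) - 1 ≤ Real.exp (l * (4*R)) - 1 := by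
    rw [sub_le_sub_iff_right]
    exact Real.exp_le_exp.mpr (by nlinarith)
  rcases lt_trichotomy x 0 with hx0 | hx0 | hx0
  · -- reflection
    have hmem : ∀ t : ℝ, t ∈ Icc (-(2*R)) (2*R) → -t ∈ Icc (-(2*R)) (2*R) := by
      intro t ht
      exact ⟨by linarith [ht.2], by linarith [ht.1]⟩
    have hres := harnack_half (A := fun t => A (-t)) (B := fun t => -B (-t))
      (κ := κ) (M := M) (R := R) hκ hM hR
      (s := (fun t : ℝ => -t) ⁻¹' s) (hs.preimage continuous_neg)
      (fun t ht => by
        simp only [mem_preimage]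
        exact hsub (hmem t ht))
      (U := fun t => U (-t)) (U' := fun t => -U' (-t)) (U'' := fun t => U'' (-t))
      (fun t ht => by
        have h1 : HasDerivAt (fun y : ℝ => -y) (-1) t := (hasDerivAt_id t).neg
        have h2 := (hU1 (-t) ht).comp t h1
        simp only [Function.comp_def, mul_neg, mul_one, neg_neg] at h2; exact h2)
      (fun t ht => by
        have h1 : HasDerivAt (fun y : ℝ => -y) (-1) t := (hasDerivAt_id t).neg
        have h2 := ((hU2 (-t) ht).comp t h1).neg
        simp only [Function.comp_def, mul_neg, mul_one, neg_neg] at h2; exact h2)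
      (fun t => hU0 (-t))
      (fun t ht => hA (-t) (hmem t ht))
      (fun t ht => by rw [abs_neg]; exact hB (-t) (hmem t ht))
      (fun t ht => by
        beta_reduce
        nlinarith [hIneq (-t) (hmem t ht)])
      (x := -x) (by linarith) (by linarith [hx.1])
    simpa using hres
  · -- x = 0
    subst hx0
    have hC : 1 ≤ 2 * (Real.exp (l * (4*R)) - 1) / (Real.exp (l * (2*R)) - 1) := by
      rw [le_div_iff₀ hD1pos]
      nlinarith
    rw [← hl]
    nlinarith [hU0 0]
  · exact harnack_half hκ hM hR hs hsub hU1 hU2 hU0 hA hB hIneq hx0 hx.2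

def Lmap : ℝ ≃L[ℝ] EuclideanSpace ℝ (Fin 1) :=
  (ContinuousLinearEquiv.funUnique (Fin 1) ℝ ℝ).symm.trans
    (EuclideanSpace.equiv (Fin 1) ℝ).symm

lemma Lmap_eq_single (t : ℝ) : Lmap t = t • EuclideanSpace.single (0 : Fin 1) (1:ℝ) := by
  ext i
  fin_cases i
  simp [EuclideanSpace.single_apply]
  rfl

lemma Lmap_one : Lmap 1 = EuclideanSpace.single (0 : Fin 1) (1:ℝ) := by
  rw [Lmap_eq_single]; simp

lemma norm_Lmap (t : ℝ) : ‖Lmap t‖ = |t| := by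
  rw [Lmap_eq_single, norm_smul]
  simp [EuclideanSpace.norm_single]

lemma Lmap_coord (x : EuclideanSpace ℝ (Fin 1)) : Lmap (x 0) = x := by
  ext i
  fin_cases i
  rfl

lemma norm_coord (x : EuclideanSpace ℝ (Fin 1)) : ‖x‖ = |x 0| := by
  rw [← Lmap_coord x, norm_Lmap]
  rfl

lemma euclid_eq_coord_smul (v : EuclideanSpace ℝ (Fin 1)) :
    v = (v 0) • EuclideanSpace.single (0 : Fin 1) (1:ℝ) := by
  rw [← Lmap_eq_single, Lmap_coord]

lemma hasDerivAt_comp_Lmap {f : EuclideanSpace ℝ (Fin 1) → ℝ} {t : ℝ}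
    (hf : DifferentiableAt ℝ f (Lmap t)) :
    HasDerivAt (fun y : ℝ => f (Lmap y))
      (fderiv ℝ f (Lmap t) (EuclideanSpace.single (0 : Fin 1) (1:ℝ))) t := by
  have h1 : HasDerivAt (fun y : ℝ => Lmap y) (Lmap 1) t := by
    simpa using (Lmap.toContinuousLinearMap.hasDerivAt (x := t))
  have h2 := hf.hasFDerivAt.comp_hasDerivAt t h1
  rwa [Lmap_one] at h2


end HarnackAux

/-- Theorem 1.1 under (H2): Harnack-type inequality in dimension one. -/
theorem harnack_H2 (a : EuclideanSpace ℝ (Fin 1) → Matrix (Fin 1) (Fin 1) ℝ)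
    (b : EuclideanSpace ℝ (Fin 1) → EuclideanSpace ℝ (Fin 1))
    (c : EuclideanSpace ℝ (Fin 1) → ℝ)
    (ν : EuclideanSpace ℝ (Fin 1) → Measure (EuclideanSpace ℝ (Fin 1)))
    (H : StandardAssumptions 1 a b c ν)
    (haLip : ∀ K : Set (EuclideanSpace ℝ (Fin 1)), IsCompact K →
      ∃ L : ℝ, ∀ i j, ∀ x ∈ K, ∀ y ∈ K, |a x i j - a y i j| ≤ L * dist x y)
    (γ : ℝ → ℝ)
    (hγ_mono : ∀ r s : ℝ, 0 < r → r ≤ s → γ r ≤ γ s)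
    (hγ_ge : ∀ r : ℝ, 0 < r → r ≤ γ r)
    (hsupp : ∀ R : ℝ, 0 < R → ∀ x ∈ ball (0 : EuclideanSpace ℝ (Fin 1)) R,
      ν x (ball (0 : EuclideanSpace ℝ (Fin 1)) (γ R))ᶜ = 0) :
    ∀ R : ℝ, 0 < R → ∃ C : ℝ, 0 < C ∧
      ∀ u : EuclideanSpace ℝ (Fin 1) → ℝ, Continuous u → (∀ x, 0 ≤ u x) →
        ContDiffOn ℝ 2 u (ball (0 : EuclideanSpace ℝ (Fin 1)) (2 * γ (2 * R + γ (2 * R)))) →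
        (∀ x ∈ ball (0 : EuclideanSpace ℝ (Fin 1)) (2 * γ (2 * R + γ (2 * R))),
          Iop 1 a b c ν u x = 0) →
        ∀ x ∈ ball (0 : EuclideanSpace ℝ (Fin 1)) R, u x ≤ C * u 0 := by
  intro R hR
  have h2R : (0:ℝ) < 2*R := by linarith
  have hg1 : 2*R ≤ γ (2*R) := hγ_ge _ h2R
  have hg2 : 2*R + γ (2*R) ≤ γ (2*R + γ (2*R)) := hγ_ge _ (by linarith)
  have hΓ : 4*R ≤ γ (2*R + γ (2*R)) := by linarith
  -- uniform constants on the closed ball of radius 2R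
  obtain ⟨κ, hκ0, hκell⟩ :=
    H.a_elliptic (closedBall 0 (2*R)) (isCompact_closedBall _ _)
  obtain ⟨Mb, hMb⟩ := H.b_locBdd (closedBall 0 (2*R)) (isCompact_closedBall _ _)
  obtain ⟨Mc, hMc⟩ := H.c_locBdd (closedBall 0 (2*R)) (isCompact_closedBall _ _)
  obtain ⟨Mν, hMν⟩ := H.nu_locBdd (closedBall 0 (2*R)) (isCompact_closedBall _ _)
  obtain ⟨M, hM⟩ : ∃ M : ℝ, M = max Mb (max (Mc + Mν) 0) := ⟨_, rfl⟩
  have hM0 : 0 ≤ M := by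
    rw [hM]
    exact le_trans (le_max_right _ _) (le_max_right _ _)
  have hMbM : Mb ≤ M := hM ▸ le_max_left _ _
  have hMcν : Mc + Mν ≤ M := by
    rw [hM]
    exact le_trans (le_max_left _ _) (le_max_right _ _)
  have hl0 : 0 < (2*M+2)/κ + 1 := by positivity
  have hD1pos : 0 < Real.exp (((2*M+2)/κ + 1) * (2*R)) - 1 := by
    rw [sub_pos]
    exact Real.one_lt_exp_iff.mpr (by positivity)
  have hD3pos : 0 < Real.exp (((2*M+2)/κ + 1) * (4*R)) - 1 := by
    rw [sub_pos]
    exact Real.one_lt_exp_iff.mpr (by positivity)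
  refine ⟨2 * (Real.exp (((2*M+2)/κ + 1) * (4*R)) - 1) /
      (Real.exp (((2*M+2)/κ + 1) * (2*R)) - 1), by positivity, ?_⟩
  intro u hu_cont hu0 hu2 hIu x hx
  -- notation
  have hDo : IsOpen (ball (0 : EuclideanSpace ℝ (Fin 1)) (2 * γ (2 * R + γ (2 * R)))) :=
    isOpen_ball
  have hsR : IsOpen (Lmap ⁻¹' ball (0 : EuclideanSpace ℝ (Fin 1))
      (2 * γ (2 * R + γ (2 * R)))) := hDo.preimage Lmap.continuous
  have hmemD : ∀ t : ℝ, t ∈ Icc (-(2*R)) (2*R) →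
      Lmap t ∈ ball (0 : EuclideanSpace ℝ (Fin 1)) (2 * γ (2 * R + γ (2 * R))) := by
    intro t ht
    rw [mem_ball_zero_iff, norm_Lmap]
    have : |t| ≤ 2*R := abs_le.mpr ⟨by linarith [ht.1], ht.2⟩
    linarith
  have hsub : Icc (-(2*R)) (2*R) ⊆
      Lmap ⁻¹' ball (0 : EuclideanSpace ℝ (Fin 1)) (2 * γ (2 * R + γ (2 * R))) :=
    fun t ht => hmemD t ht
  have hmemK : ∀ t : ℝ, t ∈ Icc (-(2*R)) (2*R) →
      Lmap t ∈ closedBall (0 : EuclideanSpace ℝ (Fin 1)) (2*R) := by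
    intro t ht
    rw [mem_closedBall_zero_iff, norm_Lmap]
    exact abs_le.mpr ⟨by linarith [ht.1], ht.2⟩
  -- differentiability
  have hud : ∀ y ∈ ball (0 : EuclideanSpace ℝ (Fin 1)) (2 * γ (2 * R + γ (2 * R))),
      DifferentiableAt ℝ u y := by
    intro y hy
    exact (hu2.differentiableOn (by norm_num)).differentiableAt (hDo.mem_nhds hy)
  have hfd : ContDiffOn ℝ 1 (fderiv ℝ u)
      (ball (0 : EuclideanSpace ℝ (Fin 1)) (2 * γ (2 * R + γ (2 * R)))) :=
    hu2.fderiv_of_isOpen hDo (by norm_num)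
  have hGd : ∀ y ∈ ball (0 : EuclideanSpace ℝ (Fin 1)) (2 * γ (2 * R + γ (2 * R))),
      DifferentiableAt ℝ
        (fun y => fderiv ℝ u y (EuclideanSpace.single (0 : Fin 1) (1:ℝ))) y := by
    intro y hy
    have h1 : DifferentiableAt ℝ (fderiv ℝ u) y :=
      (hfd.differentiableOn one_ne_zero).differentiableAt (hDo.mem_nhds hy)
    exact ((ContinuousLinearMap.apply ℝ ℝ
      (EuclideanSpace.single (0 : Fin 1) (1:ℝ))).differentiableAt).comp y h1
  -- differential inequality on the interval
  have hIneq : ∀ t ∈ Icc (-(2*R)) (2*R),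
      a (Lmap t) 0 0 *
        fderiv ℝ (fun y => fderiv ℝ u y (EuclideanSpace.single (0 : Fin 1) (1:ℝ)))
          (Lmap t) (EuclideanSpace.single (0 : Fin 1) (1:ℝ))
      + b (Lmap t) 0 * fderiv ℝ u (Lmap t) (EuclideanSpace.single (0 : Fin 1) (1:ℝ))
      - M * u (Lmap t) ≤ 0 := by
    intro t ht
    have hxD := hmemD t ht
    have hxK := hmemK t ht
    have hIx := hIu (Lmap t) hxD
    have hInt : -(((ν (Lmap t)) univ).toReal * u (Lmap t)) ≤
        ∫ z, (u (Lmap t + z) - u (Lmap t)) ∂(ν (Lmap t)) := by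
      by_cases hI : Integrable (fun z => u (Lmap t + z) - u (Lmap t)) (ν (Lmap t))
      · haveI := H.nu_fin (Lmap t)
        have hconst : Integrable (fun _ : EuclideanSpace ℝ (Fin 1) => u (Lmap t))
          (ν (Lmap t)) := integrable_const _
        have h2 : Integrable (fun z => u (Lmap t + z)) (ν (Lmap t)) :=
          (hI.add hconst).congr (Eventually.of_forall fun z => by
            show u (Lmap t + z) - u (Lmap t) + u (Lmap t) = u (Lmap t + z); ring)
        rw [integral_sub h2 hconst, integral_const]
        have h3 : 0 ≤ ∫ z, u (Lmap t + z) ∂(ν (Lmap t)) :=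
          integral_nonneg fun z => hu0 _
        simp only [smul_eq_mul, measureReal_def]
        linarith
      · rw [integral_undef hI]
        have : 0 ≤ ((ν (Lmap t)) univ).toReal * u (Lmap t) :=
          mul_nonneg ENNReal.toReal_nonneg (hu0 _)
        linarith
    simp only [Iop, Fin.sum_univ_one] at hIx
    have hb : fderiv ℝ u (Lmap t) (b (Lmap t)) =
        (b (Lmap t) 0) * fderiv ℝ u (Lmap t)
          (EuclideanSpace.single (0 : Fin 1) (1:ℝ)) := by
      conv_lhs => rw [euclid_eq_coord_smul (b (Lmap t))]
      rw [ContinuousLinearMap.map_smul]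
      simp
    rw [hb] at hIx
    have hcb := hMc (Lmap t) hxK
    have hνb := hMν (Lmap t) hxK
    have hc : -(|c (Lmap t)| * u (Lmap t)) ≤ c (Lmap t) * u (Lmap t) := by
      nlinarith [hu0 (Lmap t), neg_abs_le (c (Lmap t))]
    have habs : |c (Lmap t)| ≤ Mc := hcb
    have hupos := hu0 (Lmap t)
    nlinarith [hInt, hIx, mul_le_mul_of_nonneg_right habs hupos,
      mul_le_mul_of_nonneg_right hνb hupos]
  -- ellipticity and drift bounds
  have hAκ : ∀ t ∈ Icc (-(2*R)) (2*R), κ ≤ a (Lmap t) 0 0 := by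
    intro t ht
    have h := (hκell (Lmap t) (hmemK t ht)
      (EuclideanSpace.single (0 : Fin 1) (1:ℝ))).1
    simpa [Fin.sum_univ_one, EuclideanSpace.single_apply,
      EuclideanSpace.norm_single] using h
  have hBb : ∀ t ∈ Icc (-(2*R)) (2*R), |b (Lmap t) 0| ≤ M := by
    intro t ht
    have h1 : ‖b (Lmap t)‖ = |b (Lmap t) 0| := norm_coord _
    have h2 := hMb (Lmap t) (hmemK t ht)
    rw [h1] at h2
    linarith
  -- apply the core Harnack estimate
  have hcore := harnack_core (A := fun t => a (Lmap t) 0 0)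
    (B := fun t => b (Lmap t) 0) (κ := κ) (M := M) (R := R) hκ0 hM0 hR
    hsR hsub
    (U := fun t => u (Lmap t))
    (U' := fun t => fderiv ℝ u (Lmap t) (EuclideanSpace.single (0 : Fin 1) (1:ℝ)))
    (U'' := fun t => fderiv ℝ
      (fun y => fderiv ℝ u y (EuclideanSpace.single (0 : Fin 1) (1:ℝ)))
      (Lmap t) (EuclideanSpace.single (0 : Fin 1) (1:ℝ)))
    (fun t ht => hasDerivAt_comp_Lmap (hud _ ht))
    (fun t ht => hasDerivAt_comp_Lmap (hGd _ ht))
    (fun t => hu0 _)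
    hAκ hBb hIneq
  -- conclude
  have hxc : x 0 ∈ Icc (-R) R := by
    rw [mem_ball_zero_iff, norm_coord] at hx
    have := abs_lt.mp hx
    exact ⟨this.1.le, this.2.le⟩
  have hfin := hcore (x 0) hxc
  simpa [Lmap_coord x, map_zero] using hfin

end
end

section
/- Sufficiency of λ''₁ > 0 for the maximum principle under bounded coefficients (Theorem 2.1(iii)). Suppose a, b and the negative part (c − ν)⁻ of x ↦ c(x) − ν(x,ℝ^d) are bounded on ℝ^d. If λ''₁(I) > 0, then I satisfies the maximum principle on ℝ^d. -/
open MeasureTheory Metric Set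

noncomputable section

-- ===================== auxiliary material =====================

section Aux

variable {d : ℕ}
local notation "E" => EuclideanSpace ℝ (Fin d)

lemma coord_abs_le_norm (x : E) (i : Fin d) : |x i| ≤ ‖x‖ := by
  rw [EuclideanSpace.norm_eq, ← Real.sqrt_sq_eq_abs]
  apply Real.sqrt_le_sqrt
  simpa using Finset.single_le_sum (f := fun j => ‖x j‖ ^ 2) (fun j _ => sq_nonneg _)
    (Finset.mem_univ i)

lemma norm_le_sum_abs (x : E) : ‖x‖ ≤ ∑ i, |x i| := by
  rw [EuclideanSpace.norm_eq]
  have h : (∑ i, ‖x i‖ ^ 2) ≤ (∑ i, |x i|) ^ 2 := by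
    simp only [Real.norm_eq_abs]
    rw [sq (∑ i, |x i|), Finset.sum_mul]
    apply Finset.sum_le_sum
    intro i _
    rw [sq]
    exact mul_le_mul_of_nonneg_left
      (Finset.single_le_sum (f := fun j => |x j|) (fun j _ => abs_nonneg _) (Finset.mem_univ i))
      (abs_nonneg _)
  have h2 := Real.sqrt_le_sqrt h
  rwa [Real.sqrt_sq (Finset.sum_nonneg fun i _ => abs_nonneg _)] at h2

/-- 1D second derivative test (necessary direction). -/
lemma second_deriv_nonpos_at_max {ψ g : ℝ → ℝ} {m : ℝ}
    (hψ : ∀ t, HasDerivAt ψ (g t) t) (hg : HasDerivAt g m 0)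
    (hmax : ∀ t, ψ t ≤ ψ 0) : m ≤ 0 := by
  by_contra hm
  push_neg at hm
  have hloc : IsLocalMax ψ 0 := Filter.Eventually.of_forall hmax
  have hg0 : g 0 = 0 := hloc.hasDerivAt_eq_zero (hψ 0)
  have hslope := hasDerivAt_iff_tendsto_slope.mp hg
  have hev : ∀ᶠ t in nhdsWithin 0 {(0:ℝ)}ᶜ, m / 2 < slope g 0 t :=
    hslope.eventually (eventually_gt_nhds (by linarith))
  rw [eventually_nhdsWithin_iff, Metric.eventually_nhds_iff] at hev
  obtain ⟨η, hη, hball⟩ := hev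
  have hgpos : ∀ t ∈ Set.Ioo (0:ℝ) η, 0 < deriv ψ t := by
    intro t ht
    have h1 : m / 2 < slope g 0 t := by
      apply hball (by simp [Real.dist_eq, abs_of_pos ht.1]; exact ht.2)
      simp [ne_of_gt ht.1]
    rw [slope_def_field, hg0] at h1
    have h2 : m / 2 * t < g t / t * t := mul_lt_mul_of_pos_right (by simpa using h1) ht.1
    rw [div_mul_cancel₀ _ (ne_of_gt ht.1)] at h2
    rw [(hψ t).deriv]
    nlinarith [mul_pos (half_pos hm) ht.1]
  have hdiff : Differentiable ℝ ψ := fun t => (hψ t).differentiableAt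
  have hcont : Continuous ψ := hdiff.continuous
  have hmono : StrictMonoOn ψ (Set.Icc 0 η) := by
    apply strictMonoOn_of_deriv_pos (convex_Icc 0 η) hcont.continuousOn
    intro t ht
    rw [interior_Icc] at ht
    exact hgpos t ht
  have : ψ 0 < ψ (η/2) := hmono (Set.mem_Icc.mpr ⟨le_refl 0, le_of_lt hη⟩)
    (Set.mem_Icc.mpr ⟨by linarith, by linarith⟩) (by linarith)
  exact absurd (hmax (η/2)) (not_le.mpr this)

/-- auxiliary scalar barrier function -/
def gbar (t : ℝ) : ℝ := Real.sqrt (1 + t^2)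
def gbar' (t : ℝ) : ℝ := t / Real.sqrt (1 + t^2)
def gbar'' (t : ℝ) : ℝ := 1 / (Real.sqrt (1 + t^2))^3

lemma one_add_sq_pos (t : ℝ) : 0 < 1 + t^2 := by positivity

lemma gbar_sqrt_pos (t : ℝ) : 0 < Real.sqrt (1 + t^2) := Real.sqrt_pos.mpr (one_add_sq_pos t)

lemma gbar_nonneg (t : ℝ) : 0 ≤ gbar t := Real.sqrt_nonneg _

lemma abs_le_gbar (t : ℝ) : |t| ≤ gbar t := by
  rw [gbar, ← Real.sqrt_sq_eq_abs]
  exact Real.sqrt_le_sqrt (by linarith)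

lemma gbar_one_le (t : ℝ) : 1 ≤ Real.sqrt (1 + t^2) := by
  nlinarith [Real.sq_sqrt (le_of_lt (one_add_sq_pos t)), Real.sqrt_nonneg (1+t^2), sq_nonneg t]

lemma abs_gbar'_le_one (t : ℝ) : |gbar' t| ≤ 1 := by
  rw [gbar', abs_div, abs_of_pos (gbar_sqrt_pos t), div_le_one (gbar_sqrt_pos t)]
  exact abs_le_gbar t

lemma gbar''_nonneg (t : ℝ) : 0 ≤ gbar'' t := by
  rw [gbar'']; positivity

lemma gbar''_le_one (t : ℝ) : gbar'' t ≤ 1 := by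
  rw [gbar'']
  rw [div_le_one (by positivity)]
  calc (1:ℝ) = 1^3 := by norm_num
    _ ≤ (Real.sqrt (1+t^2))^3 := by
        apply pow_le_pow_left₀ (by norm_num) (gbar_one_le t)

lemma hasDerivAt_gbar (t : ℝ) : HasDerivAt gbar (gbar' t) t := by
  have h1 : HasDerivAt (fun s : ℝ => 1 + s^2) (2*t) t := by
    simpa using ((hasDerivAt_pow 2 t).const_add 1)
  have h2 := (Real.hasDerivAt_sqrt (ne_of_gt (one_add_sq_pos t))).comp t h1
  refine HasDerivAt.congr_deriv h2 ?_
  rw [gbar']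
  field_simp

lemma hasDerivAt_gbar' (t : ℝ) : HasDerivAt gbar' (gbar'' t) t := by
  have hsq : HasDerivAt (fun s : ℝ => Real.sqrt (1 + s^2)) (gbar' t) t := hasDerivAt_gbar t
  have h2 := (hasDerivAt_id t).div hsq (ne_of_gt (gbar_sqrt_pos t))
  refine HasDerivAt.congr_deriv h2 ?_
  rw [gbar'', gbar']
  have hs := gbar_sqrt_pos t
  have hsq2 : (Real.sqrt (1+t^2))^2 = 1 + t^2 := Real.sq_sqrt (le_of_lt (one_add_sq_pos t))
  simp only [id_eq]
  field_simp
  nlinarith [hsq2, hs]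

lemma contDiff_gbar : ContDiff ℝ 2 gbar := by
  rw [contDiff_iff_contDiffAt]
  intro t
  have h1 : ContDiffAt ℝ 2 (fun s : ℝ => 1 + s^2) t := by
    apply ContDiffAt.add contDiffAt_const
    exact (contDiff_id.pow 2).contDiffAt
  exact (Real.contDiffAt_sqrt (ne_of_gt (one_add_sq_pos t))).comp t h1

/-- the coercive barrier on Euclidean space -/
def rhob {d : ℕ} (x : EuclideanSpace ℝ (Fin d)) : ℝ := ∑ i, gbar (x i)

lemma contDiff_rhob : ContDiff ℝ 2 (rhob (d := d)) := by
  apply ContDiff.sum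
  intro i _
  exact contDiff_gbar.comp (EuclideanSpace.proj (𝕜 := ℝ) i).contDiff

lemma rhob_nonneg (x : E) : 0 ≤ rhob x := Finset.sum_nonneg fun i _ => gbar_nonneg _

lemma norm_le_rhob (x : E) : ‖x‖ ≤ rhob x :=
  le_trans (norm_le_sum_abs x) (Finset.sum_le_sum fun i _ => abs_le_gbar (x i))

lemma hasFDerivAt_rhob (x : E) :
    HasFDerivAt rhob (∑ i, gbar' (x i) • (EuclideanSpace.proj i : E →L[ℝ] ℝ)) x := by
  have h : HasFDerivAt (fun y : E => ∑ i, gbar (y i))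
      (∑ i, gbar' (x i) • (EuclideanSpace.proj i : E →L[ℝ] ℝ)) x := by
    apply HasFDerivAt.fun_sum
    intro i _
    have hp' := (EuclideanSpace.proj i : E →L[ℝ] ℝ).hasFDerivAt (x := x)
    have hp : HasFDerivAt (fun y : E => y i) (EuclideanSpace.proj i : E →L[ℝ] ℝ) x := hp'
    exact (hasDerivAt_gbar (x i)).comp_hasFDerivAt (h₂ := gbar) x hp
  exact h

lemma fderiv_rhob_apply (x v : E) : fderiv ℝ rhob x v = ∑ i, gbar' (x i) * v i := by
  rw [(hasFDerivAt_rhob x).fderiv]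
  simp [ContinuousLinearMap.sum_apply]

lemma abs_fderiv_rhob_le (x v : E) : |fderiv ℝ rhob x v| ≤ d * ‖v‖ := by
  rw [fderiv_rhob_apply]
  calc |∑ i, gbar' (x i) * v i| ≤ ∑ i, |gbar' (x i) * v i| := Finset.abs_sum_le_sum_abs _ _
    _ ≤ ∑ i : Fin d, ‖v‖ := by
        apply Finset.sum_le_sum
        intro i _
        rw [abs_mul]
        calc |gbar' (x i)| * |v i| ≤ 1 * |v i| :=
              mul_le_mul_of_nonneg_right (abs_gbar'_le_one _) (abs_nonneg _)
          _ = |v i| := one_mul _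
          _ ≤ ‖v‖ := coord_abs_le_norm v i
    _ = d * ‖v‖ := by simp [Finset.sum_const, Finset.card_univ, nsmul_eq_mul]

lemma fderiv_rhob_single (x : E) (j : Fin d) :
    fderiv ℝ rhob x (EuclideanSpace.single j (1:ℝ)) = gbar' (x j) := by
  rw [fderiv_rhob_apply]
  rw [Finset.sum_eq_single j]
  · simp [EuclideanSpace.single_apply]
  · intro i _ hij
    simp [EuclideanSpace.single_apply, hij]
  · simp

lemma D_rhob (x : E) (i j : Fin d) :
    fderiv ℝ (fun y => fderiv ℝ rhob y (EuclideanSpace.single j (1:ℝ))) x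
      (EuclideanSpace.single i (1:ℝ)) = if j = i then gbar'' (x j) else 0 := by
  have heq : (fun y : E => fderiv ℝ rhob y (EuclideanSpace.single j (1:ℝ)))
      = fun y : E => gbar' (y j) := funext fun y => fderiv_rhob_single y j
  rw [heq]
  have h : HasFDerivAt (fun y : E => gbar' (y j))
      (gbar'' (x j) • (EuclideanSpace.proj j : E →L[ℝ] ℝ)) x := by
    have hp' := (EuclideanSpace.proj j : E →L[ℝ] ℝ).hasFDerivAt (x := x)
    have hp : HasFDerivAt (fun y : E => y j) (EuclideanSpace.proj j : E →L[ℝ] ℝ) x := hp'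
    exact (hasDerivAt_gbar' (x j)).comp_hasFDerivAt x hp
  rw [h.fderiv]
  have hps : (EuclideanSpace.proj j : E →L[ℝ] ℝ) (EuclideanSpace.single i (1:ℝ))
      = if j = i then 1 else 0 := by
    have h0 : (EuclideanSpace.proj j : E →L[ℝ] ℝ) (EuclideanSpace.single i (1:ℝ))
        = (EuclideanSpace.single i (1:ℝ)) j := rfl
    rw [h0, EuclideanSpace.single_apply]
  rw [ContinuousLinearMap.smul_apply, hps, smul_eq_mul]
  split <;> simp

lemma euclid_decomp (ξ : E) : ξ = ∑ j, ξ j • EuclideanSpace.single j (1:ℝ) := by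
  ext i
  have hsum : (∑ j, ξ j • EuclideanSpace.single j (1:ℝ)) i
      = ∑ j, (ξ j • EuclideanSpace.single j (1:ℝ)) i := by
    induction (Finset.univ : Finset (Fin d)) using Finset.induction with
    | empty => simp
    | insert _ _ hnot ih =>
        rw [Finset.sum_insert hnot, Finset.sum_insert hnot, ← ih]; rfl
  rw [hsum]
  rw [Finset.sum_eq_single i]
  · simp [EuclideanSpace.single_apply]
  · intro j _ hji
    simp [EuclideanSpace.single_apply, Ne.symm hji]
  · simp

lemma clm_apply_decomp (T : E →L[ℝ] ℝ) (ξ : E) :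
    T ξ = ∑ i, ξ i * T (EuclideanSpace.single i (1:ℝ)) := by
  conv_lhs => rw [euclid_decomp ξ]
  rw [map_sum]
  simp

lemma contDiff_fderiv_apply {f : E → ℝ} (hf : ContDiff ℝ 2 f) (η : E) :
    ContDiff ℝ 1 (fun y => fderiv ℝ f y η) := by
  have h1 : ContDiff ℝ 1 (fderiv ℝ f) := hf.fderiv_right (by norm_num)
  exact (ContinuousLinearMap.apply ℝ ℝ η).contDiff.comp h1

lemma diff_fderiv_apply {f : E → ℝ} (hf : ContDiff ℝ 2 f) (η : E) (x : E) :
    DifferentiableAt ℝ (fun y => fderiv ℝ f y η) x :=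
  ((contDiff_fderiv_apply hf η).differentiable one_ne_zero) x

/-- second derivative along direction ξ is ≤ 0 at a global max -/
lemma hess_dir_nonpos_at_max {w : E → ℝ} (hw : ContDiff ℝ 2 w) {x₀ : E}
    (hmax : ∀ y, w y ≤ w x₀) (ξ : E) :
    fderiv ℝ (fun y => fderiv ℝ w y ξ) x₀ ξ ≤ 0 := by
  set L : ℝ → E := fun t => x₀ + t • ξ with hL
  have hLd : ∀ t, HasDerivAt L ξ t := by
    intro t
    simpa [hL] using ((hasDerivAt_id t).smul_const ξ).const_add x₀
  have hdiff : Differentiable ℝ w := hw.differentiable (by norm_num)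
  set ψ : ℝ → ℝ := fun t => w (L t) with hψdef
  set g : ℝ → ℝ := fun t => fderiv ℝ w (L t) ξ with hgdef
  have hψ : ∀ t, HasDerivAt ψ (g t) t := by
    intro t
    exact ((hdiff (L t)).hasFDerivAt).comp_hasDerivAt t (hLd t)
  have hg : HasDerivAt g (fderiv ℝ (fun y => fderiv ℝ w y ξ) x₀ ξ) 0 := by
    have hd := (diff_fderiv_apply hw ξ (L 0)).hasFDerivAt
    have h0 : L 0 = x₀ := by simp [hL]
    have h2 := hd.comp_hasDerivAt 0 (hLd 0)
    rw [h0] at h2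
    exact h2
  have hm : ∀ t, ψ t ≤ ψ 0 := by
    intro t
    have h0 : L 0 = x₀ := by simp [hL]
    simp only [hψdef]
    rw [h0]
    exact hmax (L t)
  exact second_deriv_nonpos_at_max hψ hg hm

/-- expansion of directional second derivative into coordinates -/
lemma hess_expand {w : E → ℝ} (hw : ContDiff ℝ 2 w) (x : E) (ξ : E) :
    fderiv ℝ (fun y => fderiv ℝ w y ξ) x ξ
      = ∑ i, ∑ j, ξ i * (fderiv ℝ (fun y => fderiv ℝ w y (EuclideanSpace.single j (1:ℝ))) x
          (EuclideanSpace.single i (1:ℝ))) * ξ j := by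
  have heq : (fun y => fderiv ℝ w y ξ)
      = fun y => ∑ j, ξ j * fderiv ℝ w y (EuclideanSpace.single j (1:ℝ)) :=
    funext fun y => clm_apply_decomp (fderiv ℝ w y) ξ
  rw [heq]
  have hdsum : fderiv ℝ (fun y => ∑ j, ξ j * fderiv ℝ w y (EuclideanSpace.single j (1:ℝ))) x
      = ∑ j, ξ j • fderiv ℝ (fun y => fderiv ℝ w y (EuclideanSpace.single j (1:ℝ))) x := by
    rw [fderiv_fun_sum]
    · congr 1
      funext j
      rw [fderiv_const_mul (diff_fderiv_apply hw _ x)]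
    · intro j _
      exact (diff_fderiv_apply hw _ x).const_mul _
  rw [hdsum]
  rw [ContinuousLinearMap.sum_apply]
  rw [Finset.sum_comm]
  congr 1
  funext j
  rw [ContinuousLinearMap.smul_apply, smul_eq_mul]
  rw [clm_apply_decomp (fderiv ℝ (fun y => fderiv ℝ w y (EuclideanSpace.single j (1:ℝ))) x) ξ]
  rw [Finset.mul_sum]
  congr 1
  funext i
  ring

lemma qf_eq_dot (A : Matrix (Fin d) (Fin d) ℝ) (x : Fin d → ℝ) :
    dotProduct x (A.mulVec x) = ∑ i, ∑ j, x i * A i j * x j := by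
  simp only [dotProduct, Matrix.mulVec]
  congr 1
  funext i
  rw [Finset.mul_sum]
  congr 1
  funext j
  ring

open scoped MatrixOrder in
lemma trace_pair_nonpos {A H : Matrix (Fin d) (Fin d) ℝ} (hAs : A.IsSymm)
    (hA : ∀ ξ : E, 0 ≤ ∑ i, ∑ j, ξ i * A i j * ξ j)
    (hH : ∀ ξ : E, ∑ i, ∑ j, ξ i * H i j * ξ j ≤ 0) :
    ∑ i, ∑ j, A i j * H i j ≤ 0 := by
  have hherm : A.IsHermitian := by
    ext i j
    rw [Matrix.conjTranspose_apply]
    rw [show star (A j i) = A j i from rfl]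
    exact hAs.apply i j
  have hpsd : A.PosSemidef := by
    refine Matrix.PosSemidef.of_dotProduct_mulVec_nonneg hherm ?_
    intro x
    rw [show star x = x from rfl, qf_eq_dot]
    exact hA ((WithLp.equiv 2 _).symm x)
  set B := CFC.sqrt A with hBdef
  have hB2 : B * B = A := CFC.sqrt_mul_sqrt_self A hpsd.nonneg
  have hBsymm : ∀ i j, B i j = B j i := by
    intro i j
    have hh := (Matrix.LE.le.posSemidef (CFC.sqrt_nonneg A)).1
    calc B i j = (Matrix.conjTranspose B) i j := by rw [hh]
      _ = star (B j i) := Matrix.conjTranspose_apply B j i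
      _ = B j i := rfl
  have e1 : ∀ i j, A i j * H i j = ∑ k, B k i * H i j * B k j := by
    intro i j
    rw [← hB2, Matrix.mul_apply, Finset.sum_mul]
    apply Finset.sum_congr rfl
    intro k _
    rw [hBsymm i k]
    ring
  calc ∑ i, ∑ j, A i j * H i j
      = ∑ i, ∑ j, ∑ k, B k i * H i j * B k j := by
        exact Finset.sum_congr rfl fun i _ => Finset.sum_congr rfl fun j _ => e1 i j
    _ = ∑ i, ∑ k, ∑ j, B k i * H i j * B k j := by
        exact Finset.sum_congr rfl fun i _ => Finset.sum_comm
    _ = ∑ k, ∑ i, ∑ j, B k i * H i j * B k j := Finset.sum_comm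
    _ ≤ 0 := by
        apply Finset.sum_nonpos
        intro k _
        exact hH ((WithLp.equiv 2 _).symm (fun i => B k i))

lemma entry_abs_le {A : Matrix (Fin d) (Fin d) ℝ} {M : ℝ}
    (h : ‖(Matrix.toEuclideanCLM (𝕜 := ℝ) A : E →L[ℝ] E)‖ ≤ M) (i j : Fin d) :
    |A i j| ≤ M := by
  set T := (Matrix.toEuclideanCLM (𝕜 := ℝ) A : E →L[ℝ] E) with hT
  set v : E := EuclideanSpace.single j (1:ℝ) with hv
  have hentry : (T v) i = A i j := by
    have h1 : WithLp.equiv _ _ (T v) = Matrix.toLin' A (WithLp.equiv _ _ v) :=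
      Matrix.ofLp_toEuclideanCLM A v
    have h2 : (T v) i = (Matrix.toLin' A (WithLp.equiv _ _ v)) i := by
      rw [← h1]; rfl
    rw [h2]
    have h3 : (WithLp.equiv _ _ v : Fin d → ℝ) = fun k => if k = j then 1 else 0 := by
      funext k
      rw [show (WithLp.equiv _ _ v : Fin d → ℝ) k = v k from rfl, hv,
        EuclideanSpace.single_apply]
    rw [h3]
    rw [Matrix.toLin'_apply]
    simp [Matrix.mulVec, dotProduct]
  calc |A i j| = |(T v) i| := by rw [hentry]
    _ ≤ ‖T v‖ := coord_abs_le_norm _ _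
    _ ≤ ‖T‖ * ‖v‖ := T.le_opNorm v
    _ = ‖T‖ := by
        have hv1 : ‖v‖ = 1 := by rw [hv, EuclideanSpace.norm_single]; norm_num
        rw [hv1, mul_one]
    _ ≤ M := h

lemma integrable_shift {f : E → ℝ} (hf : Continuous f) (x : E) (μ : Measure E)
    [IsFiniteMeasure μ] (K₁ : Set E) (hK : IsCompact K₁) (hnull : μ K₁ᶜ = 0) :
    Integrable (fun z => f (x + z)) μ := by
  have hg : Continuous fun z : E => f (x + z) := hf.comp (continuous_const.add continuous_id)
  obtain ⟨C, hC⟩ := hK.exists_bound_of_continuousOn hg.continuousOn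
  apply Integrable.mono' (integrable_const C) hg.aestronglyMeasurable
  rw [MeasureTheory.ae_iff]
  apply measure_mono_null _ hnull
  intro z hz
  simp only [Set.mem_setOf_eq, not_le] at hz
  intro hzK
  exact absurd (hC z hzK) (not_le.mpr hz)

lemma integrable_shift_sub {f : E → ℝ} (hf : Continuous f) (x : E) (μ : Measure E)
    [IsFiniteMeasure μ] (K₁ : Set E) (hK : IsCompact K₁) (hnull : μ K₁ᶜ = 0) :
    Integrable (fun z => f (x + z) - f x) μ :=
  (integrable_shift hf x μ K₁ hK hnull).sub (integrable_const _)

lemma fderiv_add_smul {f g : E → ℝ} (hf : ContDiff ℝ 2 f) (hg : ContDiff ℝ 2 g) (s : ℝ)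
    (y : E) : fderiv ℝ (fun y' => f y' + s * g y') y = fderiv ℝ f y + s • fderiv ℝ g y := by
  rw [fderiv_fun_add (hf.differentiable two_ne_zero y)
    ((hg.differentiable two_ne_zero y).const_mul s)]
  rw [fderiv_const_mul (hg.differentiable two_ne_zero y) s]

lemma D_add_smul {f g : E → ℝ} (hf : ContDiff ℝ 2 f) (hg : ContDiff ℝ 2 g) (s : ℝ)
    (x : E) (i j : Fin d) :
    fderiv ℝ (fun y => fderiv ℝ (fun y' => f y' + s * g y') y (EuclideanSpace.single j (1:ℝ))) x
        (EuclideanSpace.single i (1:ℝ))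
      = fderiv ℝ (fun y => fderiv ℝ f y (EuclideanSpace.single j (1:ℝ))) x
          (EuclideanSpace.single i (1:ℝ))
        + s * fderiv ℝ (fun y => fderiv ℝ g y (EuclideanSpace.single j (1:ℝ))) x
            (EuclideanSpace.single i (1:ℝ)) := by
  have hDfun : (fun y => fderiv ℝ (fun y' => f y' + s * g y') y (EuclideanSpace.single j (1:ℝ)))
      = fun y => fderiv ℝ f y (EuclideanSpace.single j (1:ℝ))
          + s * fderiv ℝ g y (EuclideanSpace.single j (1:ℝ)) := by
    funext y
    rw [fderiv_add_smul hf hg s y]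
    simp
  rw [hDfun]
  rw [fderiv_fun_add (diff_fderiv_apply hf _ x) ((diff_fderiv_apply hg _ x).const_mul s)]
  rw [fderiv_const_mul (diff_fderiv_apply hg _ x) s]
  simp

lemma Iop_add_smul (a : E → Matrix (Fin d) (Fin d) ℝ) (b : E → E) (c : E → ℝ)
    (ν : E → Measure E) {f g : E → ℝ} (hf : ContDiff ℝ 2 f) (hg : ContDiff ℝ 2 g) (s : ℝ)
    (x : E) (hfin : IsFiniteMeasure (ν x)) (K₁ : Set E) (hK : IsCompact K₁)
    (hnull : ν x K₁ᶜ = 0) :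
    Iop d a b c ν (fun y => f y + s * g y) x = Iop d a b c ν f x + s * Iop d a b c ν g x := by
  haveI := hfin
  have hfc : Continuous f := hf.continuous
  have hgc : Continuous g := hg.continuous
  have hIf := integrable_shift_sub hfc x (ν x) K₁ hK hnull
  have hIg := integrable_shift_sub hgc x (ν x) K₁ hK hnull
  have hint : ∫ z, ((fun y => f y + s * g y) (x + z) - (fun y => f y + s * g y) x) ∂(ν x)
      = (∫ z, (f (x + z) - f x) ∂(ν x)) + s * ∫ z, (g (x + z) - g x) ∂(ν x) := by
    have heq : (fun z => ((fun y => f y + s * g y) (x + z) - (fun y => f y + s * g y) x))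
        = fun z => (f (x + z) - f x) + s * (g (x + z) - g x) := by
      funext z; simp; ring
    rw [heq, integral_add hIf (hIg.const_mul s), integral_const_mul]
  have hsum : (∑ i, ∑ j, a x i j *
        fderiv ℝ (fun y => fderiv ℝ (fun y' => f y' + s * g y') y
          (EuclideanSpace.single j (1:ℝ))) x (EuclideanSpace.single i (1:ℝ)))
      = (∑ i, ∑ j, a x i j *
          fderiv ℝ (fun y => fderiv ℝ f y (EuclideanSpace.single j (1:ℝ))) x
            (EuclideanSpace.single i (1:ℝ)))
        + s * (∑ i, ∑ j, a x i j *
          fderiv ℝ (fun y => fderiv ℝ g y (EuclideanSpace.single j (1:ℝ))) x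
            (EuclideanSpace.single i (1:ℝ))) := by
    rw [Finset.mul_sum, ← Finset.sum_add_distrib]
    apply Finset.sum_congr rfl
    intro i _
    rw [Finset.mul_sum, ← Finset.sum_add_distrib]
    apply Finset.sum_congr rfl
    intro j _
    rw [D_add_smul hf hg s x i j]
    ring
  have hfd : fderiv ℝ (fun y => f y + s * g y) x (b x)
      = fderiv ℝ f x (b x) + s * fderiv ℝ g x (b x) := by
    rw [fderiv_add_smul hf hg s x]; simp
  simp only [Iop, hint, hsum, hfd]
  ring

end Aux

-- ===================== end auxiliary material =====================


set_option maxHeartbeats 2000000 in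
/-- Theorem 2.1(iii): if `a`, `b` and `(c − ν)⁻` are bounded, then
`λ''₁(I) > 0` implies the maximum principle. -/
theorem lamPP1_pos_implies_maxPrinciple_bounded (d : ℕ) (hd : 1 ≤ d)
    (a : EuclideanSpace ℝ (Fin d) → Matrix (Fin d) (Fin d) ℝ)
    (b : EuclideanSpace ℝ (Fin d) → EuclideanSpace ℝ (Fin d))
    (c : EuclideanSpace ℝ (Fin d) → ℝ)
    (ν : EuclideanSpace ℝ (Fin d) → Measure (EuclideanSpace ℝ (Fin d)))
    (H : StandardAssumptions d a b c ν)
    (ha_bdd : ∃ M : ℝ, ∀ x, ‖(Matrix.toEuclideanCLM (𝕜 := ℝ) (a x) :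
      EuclideanSpace ℝ (Fin d) →L[ℝ] EuclideanSpace ℝ (Fin d))‖ ≤ M)
    (hb_bdd : ∃ M : ℝ, ∀ x, ‖b x‖ ≤ M)
    (hcν_bdd : ∃ M : ℝ, ∀ x, max (-(c x - (ν x Set.univ).toReal)) 0 ≤ M)
    (hpos : (0 : EReal) < lamPP1 d (Iop d a b c ν)) :
    MaxPrinciple d (Iop d a b c ν) := by
  classical
  -- extract the test function φ
  rw [lamPP1] at hpos
  obtain ⟨le', hle_mem, hle_pos⟩ := lt_sSup_iff.mp hpos
  obtain ⟨l, hl_mem, rfl⟩ := hle_mem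
  have hl : (0:ℝ) < l := EReal.coe_pos.mp hle_pos
  obtain ⟨φ, hφC2, ⟨δ, hδpos, hφδ⟩, hφineq⟩ := hl_mem
  have φpos : ∀ x, 0 < φ x := fun x => lt_of_lt_of_le hδpos (hφδ x)
  -- bounded coefficient constants, normalized nonnegative
  obtain ⟨Ma0, hMa0⟩ := ha_bdd
  set Ma := max Ma0 0 with hMadef
  have hMa : ∀ x, ‖(Matrix.toEuclideanCLM (𝕜 := ℝ) (a x) :
      EuclideanSpace ℝ (Fin d) →L[ℝ] EuclideanSpace ℝ (Fin d))‖ ≤ Ma :=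
    fun x => le_trans (hMa0 x) (le_max_left _ _)
  have hMa_nn : 0 ≤ Ma := le_max_right _ _
  obtain ⟨Mb0, hMb0⟩ := hb_bdd
  set Mb := max Mb0 0 with hMbdef
  have hMb : ∀ x, ‖b x‖ ≤ Mb := fun x => le_trans (hMb0 x) (le_max_left _ _)
  have hMb_nn : 0 ≤ Mb := le_max_right _ _
  obtain ⟨M0, hM0⟩ := hcν_bdd
  set M := max M0 0 with hMdef
  have hM : ∀ x, -(c x - (ν x Set.univ).toReal) ≤ M :=
    fun x => le_trans (le_trans (le_max_left _ _) (hM0 x)) (le_max_left _ _)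
  have hM_nn : 0 ≤ M := le_max_right _ _
  -- the maximum principle
  intro u huC2 hIu hbdd
  by_contra hcon
  push_neg at hcon
  obtain ⟨x₀, hx₀⟩ := hcon
  obtain ⟨M₀, hM₀mem⟩ := hbdd
  have hM₀ : ∀ x, u x ≤ M₀ := fun x => hM₀mem (Set.mem_range_self x)
  have hM₀pos : 0 < M₀ := lt_of_lt_of_le hx₀ (hM₀ x₀)
  -- critical ratio t
  set S : Set ℝ := Set.range (fun x => u x / φ x) with hSdef
  have hSne : S.Nonempty := Set.range_nonempty _
  have hSbdd : BddAbove S := by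
    refine ⟨M₀ / δ, ?_⟩
    rintro _ ⟨x, rfl⟩
    exact div_le_div₀ (le_of_lt hM₀pos) (hM₀ x) hδpos (hφδ x)
  set t := sSup S with htdef
  have ht_ge : ∀ x, u x / φ x ≤ t := fun x => le_csSup hSbdd (Set.mem_range_self x)
  have htpos : 0 < t := lt_of_lt_of_le (div_pos hx₀ (φpos x₀)) (ht_ge x₀)
  have hvle : ∀ x, u x - t * φ x ≤ 0 := by
    intro x
    have h1 := (div_le_iff₀ (φpos x)).mp (ht_ge x)
    nlinarith
  -- approximate maximizers
  have happrox : ∀ ε : ℝ, 0 < ε → ∃ y, -ε < u y - t * φ y := by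
    intro ε hε
    set ε' := min (t/2) (ε*t/(2*M₀)) with hε'def
    have hε'pos : 0 < ε' := lt_min (by positivity) (by positivity)
    have hε'1 : ε' ≤ t/2 := min_le_left _ _
    have hε'2 : ε' ≤ ε*t/(2*M₀) := min_le_right _ _
    obtain ⟨s', hs'mem, hs'⟩ := exists_lt_of_lt_csSup hSne (show t - ε' < t by linarith)
    obtain ⟨y, rfl⟩ := hs'mem
    refine ⟨y, ?_⟩
    have hr : t - ε' < u y / φ y := hs'
    have h1 : t/2 ≤ u y / φ y := by linarith
    have h2 : t/2 * φ y ≤ u y := (le_div_iff₀ (φpos y)).mp h1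
    have hφy : φ y ≤ 2*M₀/t := by
      rw [le_div_iff₀ htpos]
      have := hM₀ y
      nlinarith
    have h4 : φ y * ε' ≤ ε := by
      have h5 : φ y * ε' ≤ (2*M₀/t) * (ε*t/(2*M₀)) :=
        mul_le_mul hφy hε'2 (le_of_lt hε'pos) (by positivity)
      have h6 : (2*M₀/t) * (ε*t/(2*M₀)) = ε := by
        field_simp
      linarith [h5, h6.le]
    have h7 : (t - ε')*φ y < u y := (lt_div_iff₀ (φpos y)).mp hr
    nlinarith [h4, h7]
  -- choose ε and the approximate maximizer y
  set ε : ℝ := (t*l*δ)/(2*(M+1)) with hεdef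
  have hεpos : 0 < ε := by positivity
  have hMε : M*ε ≤ t*l*δ/2 := by
    rw [hεdef]
    rw [mul_div_assoc']
    rw [div_le_div_iff₀ (by positivity) (by norm_num)]
    nlinarith [mul_pos (mul_pos htpos hl) hδpos]
  obtain ⟨y, hy⟩ := happrox ε hεpos
  -- v and w
  set v : EuclideanSpace ℝ (Fin d) → ℝ := fun x => u x - t * φ x with hvdef
  have hvC2 : ContDiff ℝ 2 v := huC2.sub (contDiff_const.mul hφC2)
  set Δ : ℝ := t*l*δ - M*ε with hΔdef
  have hΔpos : 0 < Δ := by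
    have : 0 < t*l*δ := by positivity
    rw [hΔdef]; linarith
  set Cden : ℝ := d*Ma + d*Mb + M*(rhob y) + 1 with hCdendef
  have hCden_pos : 0 < Cden := by
    have h1 : (0:ℝ) ≤ d*Ma := by positivity
    have h2 : (0:ℝ) ≤ d*Mb := by positivity
    have h3 : (0:ℝ) ≤ M*(rhob y) := mul_nonneg hM_nn (rhob_nonneg y)
    rw [hCdendef]; linarith
  set α : ℝ := Δ/(2*Cden) with hαdef
  have hαpos : 0 < α := by positivity
  have hαbound : α*(d*Ma + d*Mb + M*(rhob y)) ≤ Δ/2 := by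
    have h1 : α*(d*Ma + d*Mb + M*(rhob y)) ≤ α*Cden := by
      apply mul_le_mul_of_nonneg_left _ (le_of_lt hαpos)
      rw [hCdendef]; linarith
    have h2 : α*Cden = Δ/2 := by
      rw [hαdef]; field_simp
    linarith
  set w : EuclideanSpace ℝ (Fin d) → ℝ := fun x => v x - α * rhob x with hwdef
  have hwC2 : ContDiff ℝ 2 w := hvC2.sub (contDiff_const.mul contDiff_rhob)
  -- w attains a global max
  have hwle : ∀ x, w x ≤ -(α*‖x‖) := by
    intro x
    have h1 := hvle x
    have h2 := norm_le_rhob x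
    have h3 : α*‖x‖ ≤ α*rhob x := mul_le_mul_of_nonneg_left h2 (le_of_lt hαpos)
    simp only [hwdef, hvdef]
    linarith
  have hwy0 : w y ≤ 0 := le_trans (hwle y)
    (neg_nonpos.mpr (mul_nonneg (le_of_lt hαpos) (norm_nonneg y)))
  set R : ℝ := (-(w y))/α + ‖y‖ + 1 with hRdef
  have hy_mem : y ∈ Metric.closedBall (0 : EuclideanSpace ℝ (Fin d)) R := by
    rw [Metric.mem_closedBall, dist_zero_right]
    have h0 : 0 ≤ (-(w y))/α := div_nonneg (by linarith) (le_of_lt hαpos)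
    rw [hRdef]
    linarith [norm_nonneg y]
  obtain ⟨xs, hxs_mem, hxs_max⟩ :=
    (isCompact_closedBall (0 : EuclideanSpace ℝ (Fin d)) R).exists_isMaxOn
      ⟨y, hy_mem⟩ hwC2.continuous.continuousOn
  have hxs_max' : ∀ x ∈ Metric.closedBall (0 : EuclideanSpace ℝ (Fin d)) R, w x ≤ w xs :=
    isMaxOn_iff.mp hxs_max
  have hgmax : ∀ x, w x ≤ w xs := by
    intro x
    by_cases hx : x ∈ Metric.closedBall (0 : EuclideanSpace ℝ (Fin d)) R
    · exact hxs_max' x hx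
    · have hxnorm : R < ‖x‖ := by
        rw [Metric.mem_closedBall, dist_zero_right] at hx
        linarith [not_le.mp hx]
      have h1 : w x ≤ -(α*‖x‖) := hwle x
      have h2 : -(α*‖x‖) < w y := by
        have h3 : (-(w y))/α < ‖x‖ := by
          rw [hRdef] at hxnorm
          linarith [norm_nonneg y]
        rw [div_lt_iff₀ hαpos] at h3
        nlinarith
      linarith [hxs_max' y hy_mem]
  -- measure support facts at xs
  obtain ⟨K₁, hK₁c, hK₁n⟩ := H.nu_locSupp {xs} isCompact_singleton
  have hnull : ν xs K₁ᶜ = 0 := hK₁n xs rfl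
  haveI hfin : IsFiniteMeasure (ν xs) := H.nu_fin xs
  -- decompose Iop u
  have hu_eq : u = fun y' => v y' + t * φ y' := by
    funext z; simp only [hvdef]; ring
  have hIop_dec : Iop d a b c ν (fun y' => v y' + t * φ y') xs
      = Iop d a b c ν v xs + t * Iop d a b c ν φ xs :=
    Iop_add_smul a b c ν hvC2 hφC2 t xs hfin K₁ hK₁c hnull
  have h0 : (0:ℝ) ≤ Iop d a b c ν v xs + t * Iop d a b c ν φ xs := by
    rw [← hIop_dec, ← hu_eq]
    exact hIu xs
  have hφb : Iop d a b c ν φ xs ≤ -(l * φ xs) := by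
    have := hφineq xs
    linarith
  have hlower : t*l*δ ≤ Iop d a b c ν v xs := by
    have h1 : t * Iop d a b c ν φ xs ≤ t * (-(l * φ xs)) :=
      mul_le_mul_of_nonneg_left hφb (le_of_lt htpos)
    have h2 : l * δ ≤ l * φ xs := mul_le_mul_of_nonneg_left (hφδ xs) (le_of_lt hl)
    have h3 : t * (l*δ) ≤ t * (l * φ xs) := mul_le_mul_of_nonneg_left h2 (le_of_lt htpos)
    nlinarith
  -- now bound Iop v xs from above
  have hv_eq : v = fun y' => w y' + α * rhob y' := by
    funext z; simp only [hwdef]; ring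
  -- (1) second order term
  have hQw : (∑ i, ∑ j, a xs i j *
      fderiv ℝ (fun y' => fderiv ℝ w y' (EuclideanSpace.single j (1:ℝ))) xs
        (EuclideanSpace.single i (1:ℝ))) ≤ 0 := by
    apply trace_pair_nonpos (H.a_symm xs)
    · intro ξ
      obtain ⟨κ, hκpos, hell⟩ := H.a_elliptic {xs} isCompact_singleton
      have := (hell xs rfl ξ).1
      nlinarith [sq_nonneg ‖ξ‖, mul_nonneg (le_of_lt hκpos) (sq_nonneg ‖ξ‖)]
    · intro ξ
      rw [← hess_expand hwC2 xs ξ]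
      exact hess_dir_nonpos_at_max hwC2 hgmax ξ
  have hQρ : (∑ i, ∑ j, a xs i j *
      fderiv ℝ (fun y' => fderiv ℝ rhob y' (EuclideanSpace.single j (1:ℝ))) xs
        (EuclideanSpace.single i (1:ℝ))) ≤ d*Ma := by
    have hrw : ∀ i : Fin d, ∑ j, a xs i j *
        fderiv ℝ (fun y' => fderiv ℝ rhob y' (EuclideanSpace.single j (1:ℝ))) xs
          (EuclideanSpace.single i (1:ℝ)) = a xs i i * gbar'' (xs i) := by
      intro i
      rw [Finset.sum_eq_single i]
      · rw [D_rhob xs i i]; simp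
      · intro j _ hji
        rw [D_rhob xs i j]
        simp [hji]
      · simp
    calc (∑ i, ∑ j, a xs i j *
        fderiv ℝ (fun y' => fderiv ℝ rhob y' (EuclideanSpace.single j (1:ℝ))) xs
          (EuclideanSpace.single i (1:ℝ)))
        = ∑ i, a xs i i * gbar'' (xs i) := Finset.sum_congr rfl fun i _ => hrw i
      _ ≤ ∑ i : Fin d, Ma := by
          apply Finset.sum_le_sum
          intro i _
          have h1 : |a xs i i| ≤ Ma := entry_abs_le (hMa xs) i i
          have h2 := gbar''_nonneg (xs i)
          have h3 := gbar''_le_one (xs i)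
          calc a xs i i * gbar'' (xs i) ≤ |a xs i i| * gbar'' (xs i) :=
                mul_le_mul_of_nonneg_right (le_abs_self _) h2
            _ ≤ |a xs i i| * 1 := mul_le_mul_of_nonneg_left h3 (abs_nonneg _)
            _ = |a xs i i| := mul_one _
            _ ≤ Ma := h1
      _ = d * Ma := by simp [Finset.sum_const, Finset.card_univ, nsmul_eq_mul]
  have hQv : (∑ i, ∑ j, a xs i j *
      fderiv ℝ (fun y' => fderiv ℝ v y' (EuclideanSpace.single j (1:ℝ))) xs
        (EuclideanSpace.single i (1:ℝ))) ≤ α*(d*Ma) := by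
    have hsplit : (∑ i, ∑ j, a xs i j *
        fderiv ℝ (fun y' => fderiv ℝ v y' (EuclideanSpace.single j (1:ℝ))) xs
          (EuclideanSpace.single i (1:ℝ)))
        = (∑ i, ∑ j, a xs i j *
            fderiv ℝ (fun y' => fderiv ℝ w y' (EuclideanSpace.single j (1:ℝ))) xs
              (EuclideanSpace.single i (1:ℝ)))
          + α * (∑ i, ∑ j, a xs i j *
            fderiv ℝ (fun y' => fderiv ℝ rhob y' (EuclideanSpace.single j (1:ℝ))) xs
              (EuclideanSpace.single i (1:ℝ))) := by
      rw [Finset.mul_sum, ← Finset.sum_add_distrib]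
      apply Finset.sum_congr rfl
      intro i _
      rw [Finset.mul_sum, ← Finset.sum_add_distrib]
      apply Finset.sum_congr rfl
      intro j _
      conv_lhs => rw [hv_eq]
      rw [D_add_smul hwC2 contDiff_rhob α xs i j]
      ring
    rw [hsplit]
    have h1 : α * (∑ i, ∑ j, a xs i j *
        fderiv ℝ (fun y' => fderiv ℝ rhob y' (EuclideanSpace.single j (1:ℝ))) xs
          (EuclideanSpace.single i (1:ℝ))) ≤ α * (d*Ma) :=
      mul_le_mul_of_nonneg_left hQρ (le_of_lt hαpos)
    linarith
  -- (2) first order term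
  have hfd_w : fderiv ℝ w xs = 0 := by
    apply IsLocalMax.fderiv_eq_zero
    exact Filter.Eventually.of_forall hgmax
  have hfd_v : fderiv ℝ v xs (b xs) ≤ α*(d*Mb) := by
    have h1 : fderiv ℝ v xs = fderiv ℝ w xs + α • fderiv ℝ rhob xs := by
      conv_lhs => rw [hv_eq]
      exact fderiv_add_smul hwC2 contDiff_rhob α xs
    rw [h1, hfd_w]
    simp only [ContinuousLinearMap.add_apply, ContinuousLinearMap.zero_apply,
      ContinuousLinearMap.smul_apply, smul_eq_mul, zero_add]
    have h2 : fderiv ℝ rhob xs (b xs) ≤ d * Mb := by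
      have h3 := abs_fderiv_rhob_le xs (b xs)
      have h4 : (d:ℝ) * ‖b xs‖ ≤ d * Mb :=
        mul_le_mul_of_nonneg_left (hMb xs) (Nat.cast_nonneg d)
      calc fderiv ℝ rhob xs (b xs) ≤ |fderiv ℝ rhob xs (b xs)| := le_abs_self _
        _ ≤ d * ‖b xs‖ := h3
        _ ≤ d * Mb := h4
    exact mul_le_mul_of_nonneg_left h2 (le_of_lt hαpos)
  -- (3) zeroth order + nonlocal term
  have hvxs : v xs ≤ 0 := hvle xs
  have hvxs_lb : -(v xs) ≤ ε + α * rhob y := by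
    have h1 : w y ≤ w xs := hgmax y
    simp only [hwdef] at h1
    have h2 : 0 ≤ α * rhob xs := mul_nonneg (le_of_lt hαpos) (rhob_nonneg xs)
    have h3 : -ε < v y := hy
    linarith
  have hint_bound : c xs * v xs + (∫ z, (v (xs + z) - v xs) ∂(ν xs))
      ≤ M * (ε + α * rhob y) := by
    have hsplit : (∫ z, (v (xs + z) - v xs) ∂(ν xs))
        = (∫ z, v (xs + z) ∂(ν xs)) - (ν xs Set.univ).toReal * v xs := by
      rw [integral_sub (integrable_shift hvC2.continuous xs (ν xs) K₁ hK₁c hnull)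
        (integrable_const _), integral_const]
      simp [smul_eq_mul, Measure.real]
    rw [hsplit]
    have hintle : (∫ z, v (xs + z) ∂(ν xs)) ≤ 0 :=
      integral_nonpos (fun z => hvle (xs + z))
    have hcν : -(c xs - (ν xs Set.univ).toReal) ≤ M := hM xs
    have hkey : (c xs - (ν xs Set.univ).toReal) * v xs ≤ M * (-(v xs)) := by
      nlinarith [mul_nonneg (show (0:ℝ) ≤ (c xs - (ν xs Set.univ).toReal) + M by linarith)
        (neg_nonneg.mpr hvxs)]
    have hfin : M * (-(v xs)) ≤ M * (ε + α * rhob y) :=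
      mul_le_mul_of_nonneg_left hvxs_lb hM_nn
    nlinarith
  -- assemble the upper bound for Iop v xs
  have hupper : Iop d a b c ν v xs ≤ α*(d*Ma) + α*(d*Mb) + M*(ε + α*rhob y) := by
    rw [Iop]
    have := hQv
    have := hfd_v
    have := hint_bound
    linarith
  -- final contradiction
  have hfinal : t*l*δ ≤ α*(d*Ma + d*Mb + M*(rhob y)) + M*ε := by
    have h1 := le_trans hlower hupper
    nlinarith
  have : t*l*δ ≤ Δ/2 + M*ε := le_trans hfinal (by linarith)
  rw [hΔdef] at this
  linarith


end
end

section
/- Equivalent definition of λ''(I,D) for potentials bounded above (Remark after Theorem 2.3). Let D ⊆ ℝ^d be open with sup_{x∈D} c(x) < ∞. Then λ''(I, D) = sup{λ ∈ ℝ : there is a nonnegative continuous φ : ℝ^d → ℝ, twice continuously differentiable on D, with inf_D φ > 0 and Iφ + λφ ≤ 0 on D}, i.e., in the definition of λ''(I,D) the requirement inf_{ℝ^d} φ > 0 may be relaxed to φ ≥ 0 on ℝ^d and inf_D φ > 0 without changing the value (equality in the extended reals). -/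
open MeasureTheory Metric Set

noncomputable section

/-- Remark after Theorem 2.3: if `sup_D c < ∞`, then in the definition of
`λ''(I, D)` the requirement `inf_{ℝ^d} φ > 0` can be relaxed to `φ ≥ 0` on `ℝ^d` together with
`inf_D φ > 0`, without changing the value. -/
theorem lamPPD_relaxed (d : ℕ) (hd : 1 ≤ d)
    (a : EuclideanSpace ℝ (Fin d) → Matrix (Fin d) (Fin d) ℝ)
    (b : EuclideanSpace ℝ (Fin d) → EuclideanSpace ℝ (Fin d))
    (c : EuclideanSpace ℝ (Fin d) → ℝ)
    (ν : EuclideanSpace ℝ (Fin d) → Measure (EuclideanSpace ℝ (Fin d)))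
    (H : StandardAssumptions d a b c ν)
    (D : Set (EuclideanSpace ℝ (Fin d))) (hD : IsOpen D)
    (hc : ∃ M : ℝ, ∀ x ∈ D, c x ≤ M) :
    lamPPD d (Iop d a b c ν) D =
      sSup (Real.toEReal '' {l : ℝ | ∃ φ : EuclideanSpace ℝ (Fin d) → ℝ,
        Continuous φ ∧ (∀ x, 0 ≤ φ x) ∧ ContDiffOn ℝ 2 φ D ∧
        (∃ δ > (0:ℝ), ∀ x ∈ D, δ ≤ φ x) ∧
        ∀ x ∈ D, Iop d a b c ν φ x + l * φ x ≤ 0}) := by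
  have key : ∀ (φ : EuclideanSpace ℝ (Fin d) → ℝ) (ε : ℝ) (x : EuclideanSpace ℝ (Fin d)),
      Iop d a b c ν (fun y => φ y + ε) x = Iop d a b c ν φ x + c x * ε := by
    intro φ ε x
    have h1 : ∀ y, fderiv ℝ (fun w => φ w + ε) y = fderiv ℝ φ y := fun y => fderiv_add_const ε
    simp only [Iop, h1]
    have h2 : ∀ z, (φ (x + z) + ε - (φ x + ε)) = φ (x + z) - φ x := fun z => by ring
    simp only [h2]
    ring
  apply le_antisymm
  · apply sSup_le_sSup
    rintro x ⟨l, ⟨φ, hcont, hcd, ⟨δ, hδ, hglob⟩, hineq⟩, rfl⟩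
    exact ⟨l, ⟨φ, hcont, fun x => le_trans hδ.le (hglob x), hcd,
      ⟨δ, hδ, fun x _ => hglob x⟩, hineq⟩, rfl⟩
  · apply sSup_le
    rintro x ⟨l, ⟨φ, hcont, hnn, hcd, ⟨δ, hδ, hDlb⟩, hineq⟩, rfl⟩
    obtain ⟨M, hM⟩ := hc
    refine le_of_forall_lt fun w hw => ?_
    obtain ⟨r, hwr, hrl⟩ := EReal.exists_between_coe_real hw
    have hrl' : r < l := by exact_mod_cast hrl
    set η : ℝ := l - r with hη
    have hηpos : 0 < η := by simp [hη]; linarith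
    set mx : ℝ := max (M + l) 1 with hmx
    have hmxpos : (0:ℝ) < mx := lt_of_lt_of_le one_pos (le_max_right _ _)
    set ε : ℝ := min 1 (η * δ / mx) with hε
    have hεpos : 0 < ε := lt_min one_pos (div_pos (mul_pos hηpos hδ) hmxpos)
    have hεle : ε * mx ≤ η * δ := by
      have : ε ≤ η * δ / mx := min_le_right _ _
      calc ε * mx ≤ (η * δ / mx) * mx := by nlinarith
        _ = η * δ := by field_simp
    refine lt_of_lt_of_le hwr (le_sSup ⟨r, ⟨fun y => φ y + ε, hcont.add continuous_const,
      hcd.add contDiffOn_const, ⟨ε, hεpos, fun y => by show ε ≤ φ y + ε; linarith [hnn y]⟩, ?_⟩, rfl⟩)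
    intro y hy
    rw [key]
    have h0 := hineq y hy
    have hφδ := hDlb y hy
    have hcy := hM y hy
    have hbound : ε * (c y + r) ≤ η * δ := by
      have h1 : ε * (c y + r) ≤ ε * mx := by
        have : c y + r ≤ mx := le_trans (by linarith) (le_max_left _ _)
        nlinarith
      linarith
    show Iop d a b c ν φ y + c y * ε + r * (φ y + ε) ≤ 0
    nlinarith [mul_nonneg hηpos.le (sub_nonneg.2 hφδ)]

end
end

section
/- Exponential barrier estimate (display (ET2.1A) in the proof of Theorem 2.1(ii)). Let σ > 0 and assume: sup_{ℝ^d} ‖a(x)‖ < ∞ (operator norm); sup_{x≠0} b(x)·x/|x| < ∞; sup_{ℝ^d} c < ∞; there is r_∘ > 0 with supp ν(x,·) ⊆ B_{r_∘} for all x ∈ ℝ^d; and sup_{ℝ^d} ν(x,ℝ^d) < ∞. Then there exists a constant C₁ > 0 such that, with χ(x) := e^{σ‖x‖} (which is twice continuously differentiable on {‖x‖ ≥ 1}), one has I χ(x) ≤ C₁ χ(x) for every x with ‖x‖ ≥ 1. -/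
open MeasureTheory Metric Set

noncomputable section

section AuxBarrier
variable {d : ℕ}


lemma abs_coord_le_norm (v : EuclideanSpace ℝ (Fin d)) (i : Fin d) : |v i| ≤ ‖v‖ := by
  have h := norm_inner_le_norm (𝕜 := ℝ) (EuclideanSpace.single i (1:ℝ)) v
  simpa [EuclideanSpace.inner_single_left, EuclideanSpace.norm_single] using h

lemma hasFDerivAt_norm_eucl (x : EuclideanSpace ℝ (Fin d)) (hx : x ≠ 0) :
    HasFDerivAt (fun y : EuclideanSpace ℝ (Fin d) => ‖y‖) (‖x‖⁻¹ • (innerSL ℝ x)) x := by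
  have h1 : HasFDerivAt (fun y : EuclideanSpace ℝ (Fin d) => ‖y‖ ^ 2)
      ((2:ℝ) • innerSL ℝ x) x := by
    have := (hasStrictFDerivAt_norm_sq x).hasFDerivAt
    refine this.congr_fderiv ?_
    ext v; simp [two_smul]
  have hx2 : (‖x‖:ℝ) ^ 2 ≠ 0 := pow_ne_zero 2 (norm_ne_zero_iff.mpr hx)
  have h2 := h1.sqrt hx2
  have heq : (fun y : EuclideanSpace ℝ (Fin d) => Real.sqrt (‖y‖^2)) =
      fun y : EuclideanSpace ℝ (Fin d) => ‖y‖ := by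
    funext y; exact Real.sqrt_sq (norm_nonneg y)
  rw [heq] at h2
  refine h2.congr_fderiv ?_
  rw [Real.sqrt_sq (norm_nonneg x), smul_smul]
  congr 1
  have hxn : ‖x‖ ≠ 0 := norm_ne_zero_iff.mpr hx
  field_simp

lemma hasFDerivAt_chi (σ : ℝ) (x : EuclideanSpace ℝ (Fin d)) (hx : x ≠ 0) :
    HasFDerivAt (fun y : EuclideanSpace ℝ (Fin d) => Real.exp (σ * ‖y‖))
      ((Real.exp (σ * ‖x‖) * σ * ‖x‖⁻¹) • innerSL ℝ x) x := by
  have h1 := (hasFDerivAt_norm_eucl x hx).const_mul σ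
  have h2 := (Real.hasDerivAt_exp (σ * ‖x‖)).comp_hasFDerivAt x h1
  refine h2.congr_fderiv ?_
  ext v
  simp [ContinuousLinearMap.smul_apply]
  ring

lemma fderiv_chi_apply (σ : ℝ) (x : EuclideanSpace ℝ (Fin d)) (hx : x ≠ 0)
    (v : EuclideanSpace ℝ (Fin d)) :
    fderiv ℝ (fun y : EuclideanSpace ℝ (Fin d) => Real.exp (σ * ‖y‖)) x v =
      Real.exp (σ * ‖x‖) * σ * ‖x‖⁻¹ * (inner ℝ x v : ℝ) := by
  rw [(hasFDerivAt_chi σ x hx).fderiv]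
  simp [ContinuousLinearMap.smul_apply]

lemma abs_entry_le_opNorm (A : Matrix (Fin d) (Fin d) ℝ) (i j : Fin d) :
    |A i j| ≤ ‖(Matrix.toEuclideanCLM (𝕜 := ℝ) A :
      EuclideanSpace ℝ (Fin d) →L[ℝ] EuclideanSpace ℝ (Fin d))‖ := by
  set T := (Matrix.toEuclideanCLM (𝕜 := ℝ) A :
      EuclideanSpace ℝ (Fin d) →L[ℝ] EuclideanSpace ℝ (Fin d)) with hT
  have h1 : T (EuclideanSpace.single j (1:ℝ)) i = A i j := by
    have h2 := congrFun (Matrix.ofLp_toEuclideanCLM (𝕜 := ℝ) A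
      (EuclideanSpace.single j (1:ℝ))) i
    simp [hT, Matrix.mulVec_single] at h2 ⊢
  calc |A i j| = |T (EuclideanSpace.single j (1:ℝ)) i| := by rw [h1]
    _ ≤ ‖T (EuclideanSpace.single j (1:ℝ))‖ := abs_coord_le_norm _ i
    _ ≤ ‖T‖ * ‖EuclideanSpace.single j (1:ℝ)‖ := T.le_opNorm _
    _ = ‖T‖ := by rw [EuclideanSpace.norm_single, norm_one, mul_one]

set_option maxHeartbeats 1000000 in
lemma hess_bound (σ : ℝ) (hσ : 0 < σ) (x : EuclideanSpace ℝ (Fin d)) (hx1 : 1 ≤ ‖x‖) (i j : Fin d) :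
    |fderiv ℝ (fun y => fderiv ℝ (fun z : EuclideanSpace ℝ (Fin d) => Real.exp (σ * ‖z‖)) y
        (EuclideanSpace.single j (1:ℝ))) x (EuclideanSpace.single i (1:ℝ))| ≤
      σ * (σ + 2) * Real.exp (σ * ‖x‖) := by
  have hx : x ≠ 0 := by
    intro h; rw [h] at hx1; simp at hx1; linarith
  have hxn : ‖x‖ ≠ 0 := norm_ne_zero_iff.mpr hx
  have hinv : HasFDerivAt (fun y : EuclideanSpace ℝ (Fin d) => ‖y‖⁻¹)
      ((-(‖x‖ ^ 2)⁻¹) • (‖x‖⁻¹ • (innerSL ℝ x))) x :=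
    (hasDerivAt_inv hxn).comp_hasFDerivAt x (hasFDerivAt_norm_eucl x hx)
  have hproj : HasFDerivAt (fun y : EuclideanSpace ℝ (Fin d) => (y j : ℝ))
      (EuclideanSpace.proj (𝕜 := ℝ) (ι := Fin d) j) x :=
    (EuclideanSpace.proj (𝕜 := ℝ) (ι := Fin d) j).hasFDerivAt
  have h1 := (hasFDerivAt_chi σ x hx).mul hinv
  have h2 := h1.mul hproj
  have h3 := h2.const_mul σ
  have hev : (fun y => fderiv ℝ (fun z : EuclideanSpace ℝ (Fin d) => Real.exp (σ * ‖z‖)) y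
      (EuclideanSpace.single j (1:ℝ))) =ᶠ[nhds x]
      (fun y : EuclideanSpace ℝ (Fin d) => σ * (Real.exp (σ * ‖y‖) * ‖y‖⁻¹ * y j)) := by
    filter_upwards [(isOpen_compl_singleton (x := (0:EuclideanSpace ℝ (Fin d)))).mem_nhds hx]
      with y hy
    have hy0 : y ≠ 0 := hy
    rw [fderiv_chi_apply σ y hy0]
    rw [EuclideanSpace.inner_single_right]
    simp
    ring
  have hfd : fderiv ℝ (fun y => fderiv ℝ (fun z : EuclideanSpace ℝ (Fin d) => Real.exp (σ * ‖z‖)) y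
      (EuclideanSpace.single j (1:ℝ))) x = _ := hev.fderiv_eq.trans h3.fderiv
  rw [hfd]
  simp only [ContinuousLinearMap.add_apply, ContinuousLinearMap.smul_apply,
    ContinuousLinearMap.coe_smul', Pi.smul_apply, innerSL_apply_apply, smul_eq_mul, Pi.mul_apply]
  set r := ‖x‖ with hr
  set Ex := Real.exp (σ * r) with hExdef
  have hEx0 : 0 < Ex := Real.exp_pos _
  have hr0 : (0:ℝ) < r := lt_of_lt_of_le one_pos hx1
  have hrr : r * r⁻¹ = 1 := mul_inv_cancel₀ hxn
  have hρ0 : 0 < r⁻¹ := inv_pos.mpr hr0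
  have hρ1 : r⁻¹ ≤ 1 := by
    rw [← hrr]
    nlinarith
  set t : ℝ := inner ℝ x (EuclideanSpace.single i (1:ℝ)) with ht
  set u : ℝ := (EuclideanSpace.proj j) (EuclideanSpace.single i (1:ℝ)) with hu
  set s : ℝ := x j with hs
  have hut : |t| ≤ r := by
    have hti : t = x i := by
      rw [ht, EuclideanSpace.inner_single_right]; simp
    rw [hti]; exact abs_coord_le_norm x i
  have huu : |u| ≤ 1 := by
    have h1 : u = (EuclideanSpace.single i (1:ℝ)) j := rfl
    rw [h1]
    have := abs_coord_le_norm (EuclideanSpace.single i (1:ℝ)) j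
    simpa [EuclideanSpace.norm_single] using this
  have hss : |s| ≤ r := abs_coord_le_norm x j
  have heq : σ * (Ex * r⁻¹ * u + s * (Ex * (-(r ^ 2)⁻¹ * (r⁻¹ * t)) + r⁻¹ * (Ex * σ * r⁻¹ * t)))
      = σ * Ex * (r⁻¹ * u + s * t * (σ * (r⁻¹ * r⁻¹) - r⁻¹ * r⁻¹ * r⁻¹)) := by
    ring
  rw [heq, abs_mul, abs_mul, abs_of_pos hσ, abs_of_pos hEx0]
  have hP : |r⁻¹ * u + s * t * (σ * (r⁻¹ * r⁻¹) - r⁻¹ * r⁻¹ * r⁻¹)| ≤ σ + 2 := by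
    have h1 : |r⁻¹ * u| ≤ 1 := by
      rw [abs_mul, abs_of_pos hρ0]
      nlinarith [abs_nonneg u]
    have h2 : |s * t * (σ * (r⁻¹ * r⁻¹) - r⁻¹ * r⁻¹ * r⁻¹)| ≤ σ + 1 := by
      rw [abs_mul, abs_mul]
      have h3 : |σ * (r⁻¹ * r⁻¹) - r⁻¹ * r⁻¹ * r⁻¹| ≤ σ * (r⁻¹ * r⁻¹) + r⁻¹ * r⁻¹ * r⁻¹ := by
        have := abs_sub (σ * (r⁻¹ * r⁻¹)) (r⁻¹ * r⁻¹ * r⁻¹)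
        rw [abs_of_pos (by positivity : (0:ℝ) < σ * (r⁻¹ * r⁻¹)),
          abs_of_pos (by positivity : (0:ℝ) < r⁻¹ * r⁻¹ * r⁻¹)] at this
        exact this
      have h4 : |s| * |t| * |σ * (r⁻¹ * r⁻¹) - r⁻¹ * r⁻¹ * r⁻¹| ≤
          r * r * (σ * (r⁻¹ * r⁻¹) + r⁻¹ * r⁻¹ * r⁻¹) := by
        have hb0 : (0:ℝ) ≤ |σ * (r⁻¹ * r⁻¹) - r⁻¹ * r⁻¹ * r⁻¹| := abs_nonneg _
        nlinarith [abs_nonneg s, abs_nonneg t, mul_le_mul hss hut (abs_nonneg t) (le_of_lt hr0)]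
      have h5 : r * r * (σ * (r⁻¹ * r⁻¹) + r⁻¹ * r⁻¹ * r⁻¹) = σ + r⁻¹ := by
        have : r * r * (σ * (r⁻¹ * r⁻¹) + r⁻¹ * r⁻¹ * r⁻¹)
            = σ * ((r * r⁻¹) * (r * r⁻¹)) + ((r * r⁻¹) * (r * r⁻¹)) * r⁻¹ := by ring
        rw [this, hrr]; ring
      calc |s| * |t| * |σ * (r⁻¹ * r⁻¹) - r⁻¹ * r⁻¹ * r⁻¹| ≤
          r * r * (σ * (r⁻¹ * r⁻¹) + r⁻¹ * r⁻¹ * r⁻¹) := h4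
        _ = σ + r⁻¹ := h5
        _ ≤ σ + 1 := by linarith
    calc |r⁻¹ * u + s * t * (σ * (r⁻¹ * r⁻¹) - r⁻¹ * r⁻¹ * r⁻¹)| ≤
        |r⁻¹ * u| + |s * t * (σ * (r⁻¹ * r⁻¹) - r⁻¹ * r⁻¹ * r⁻¹)| := abs_add_le _ _
      _ ≤ 1 + (σ + 1) := add_le_add h1 h2
      _ = σ + 2 := by ring
  calc σ * Ex * |r⁻¹ * u + s * t * (σ * (r⁻¹ * r⁻¹) - r⁻¹ * r⁻¹ * r⁻¹)| ≤
      σ * Ex * (σ + 2) := by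
        exact mul_le_mul_of_nonneg_left hP (by positivity)
    _ = σ * (σ + 2) * Ex := by ring

end AuxBarrier

/-- display (ET2.1A) in the proof of Theorem 2.1(ii): exponential barrier
estimate `I χ ≤ C₁ χ` for `χ(x) = e^{σ‖x‖}` outside the unit ball. -/
theorem exponential_barrier (d : ℕ) (hd : 1 ≤ d)
    (a : EuclideanSpace ℝ (Fin d) → Matrix (Fin d) (Fin d) ℝ)
    (b : EuclideanSpace ℝ (Fin d) → EuclideanSpace ℝ (Fin d))
    (c : EuclideanSpace ℝ (Fin d) → ℝ)
    (ν : EuclideanSpace ℝ (Fin d) → Measure (EuclideanSpace ℝ (Fin d)))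
    (H : StandardAssumptions d a b c ν)
    (σ : ℝ) (hσ : 0 < σ)
    (ha_bdd : ∃ M : ℝ, ∀ x, ‖(Matrix.toEuclideanCLM (𝕜 := ℝ) (a x) :
      EuclideanSpace ℝ (Fin d) →L[ℝ] EuclideanSpace ℝ (Fin d))‖ ≤ M)
    (hb_bdd : ∃ M : ℝ, ∀ x : EuclideanSpace ℝ (Fin d), x ≠ 0 → (inner ℝ (b x) x : ℝ) / ‖x‖ ≤ M)
    (hc_bdd : ∃ M : ℝ, ∀ x, c x ≤ M)
    (hsupp : ∃ r₀ : ℝ, 0 < r₀ ∧ ∀ x, ν x (ball (0 : EuclideanSpace ℝ (Fin d)) r₀)ᶜ = 0)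
    (hmass : ∃ M : ℝ, ∀ x, (ν x Set.univ).toReal ≤ M) :
    ∃ C₁ : ℝ, 0 < C₁ ∧ ∀ x : EuclideanSpace ℝ (Fin d), 1 ≤ ‖x‖ →
      Iop d a b c ν (fun y => Real.exp (σ * ‖y‖)) x ≤ C₁ * Real.exp (σ * ‖x‖) := by
  obtain ⟨Ma, hMa⟩ := ha_bdd
  obtain ⟨Mb, hMb⟩ := hb_bdd
  obtain ⟨Mc, hMc⟩ := hc_bdd
  obtain ⟨r₀, hr₀pos, hr₀⟩ := hsupp
  obtain ⟨Mν, hMν⟩ := hmass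
  set Ka := max Ma 0 with hKa
  set Kb := max Mb 0 with hKb
  set Kc := max Mc 0 with hKc
  set Kν := max Mν 0 with hKν
  have hKa0 : 0 ≤ Ka := le_max_right _ _
  have hKb0 : 0 ≤ Kb := le_max_right _ _
  have hKc0 : 0 ≤ Kc := le_max_right _ _
  have hKν0 : 0 ≤ Kν := le_max_right _ _
  refine ⟨(d:ℝ)^2 * (Ka * (σ*(σ+2))) + σ*Kb + Kc + Real.exp (σ*r₀)*Kν + 1, ?_, ?_⟩
  · have h1 : (0:ℝ) ≤ (d:ℝ)^2 * (Ka * (σ*(σ+2))) := by positivity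
    have h2 : (0:ℝ) ≤ σ*Kb := by positivity
    have h3 : (0:ℝ) ≤ Real.exp (σ*r₀)*Kν := by positivity
    linarith
  · intro x hx1
    have hx : x ≠ 0 := by
      intro h; rw [h] at hx1; simp at hx1; linarith
    have hEx0 : 0 < Real.exp (σ*‖x‖) := Real.exp_pos _
    -- second-order term
    have hS : (∑ i, ∑ j, a x i j *
          fderiv ℝ (fun y => fderiv ℝ (fun y => Real.exp (σ * ‖y‖)) y
            (EuclideanSpace.single j (1:ℝ))) x (EuclideanSpace.single i (1:ℝ)))
        ≤ (d:ℝ)^2 * (Ka * (σ*(σ+2))) * Real.exp (σ*‖x‖) := by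
      have hterm : ∀ i j : Fin d, a x i j *
          fderiv ℝ (fun y => fderiv ℝ (fun y => Real.exp (σ * ‖y‖)) y
            (EuclideanSpace.single j (1:ℝ))) x (EuclideanSpace.single i (1:ℝ))
          ≤ Ka * (σ*(σ+2)*Real.exp (σ*‖x‖)) := by
        intro i j
        have h1 := abs_entry_le_opNorm (a x) i j
        have h3 : |a x i j| ≤ Ka := h1.trans ((hMa x).trans (le_max_left _ _))
        have h2 := hess_bound σ hσ x hx1 i j
        calc a x i j * fderiv ℝ (fun y => fderiv ℝ (fun y => Real.exp (σ * ‖y‖)) y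
              (EuclideanSpace.single j (1:ℝ))) x (EuclideanSpace.single i (1:ℝ))
            ≤ |a x i j * fderiv ℝ (fun y => fderiv ℝ (fun y => Real.exp (σ * ‖y‖)) y
              (EuclideanSpace.single j (1:ℝ))) x (EuclideanSpace.single i (1:ℝ))| :=
              le_abs_self _
          _ = |a x i j| * |fderiv ℝ (fun y => fderiv ℝ (fun y => Real.exp (σ * ‖y‖)) y
              (EuclideanSpace.single j (1:ℝ))) x (EuclideanSpace.single i (1:ℝ))| := abs_mul _ _
          _ ≤ Ka * (σ*(σ+2)*Real.exp (σ*‖x‖)) :=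
              mul_le_mul h3 h2 (abs_nonneg _) ((abs_nonneg _).trans h3)
      calc (∑ i, ∑ j, a x i j *
            fderiv ℝ (fun y => fderiv ℝ (fun y => Real.exp (σ * ‖y‖)) y
              (EuclideanSpace.single j (1:ℝ))) x (EuclideanSpace.single i (1:ℝ)))
          ≤ ∑ _i : Fin d, ∑ _j : Fin d, Ka * (σ*(σ+2)*Real.exp (σ*‖x‖)) :=
            Finset.sum_le_sum (fun i _ => Finset.sum_le_sum (fun j _ => hterm i j))
        _ = (d:ℝ)^2 * (Ka * (σ*(σ+2))) * Real.exp (σ*‖x‖) := by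
            simp [Finset.sum_const, Finset.card_univ, nsmul_eq_mul]
            ring
    -- first-order term
    have hT2 : fderiv ℝ (fun y => Real.exp (σ * ‖y‖)) x (b x) ≤ σ*Kb*Real.exp (σ*‖x‖) := by
      rw [fderiv_chi_apply σ x hx]
      have hq : (inner ℝ (b x) x : ℝ) / ‖x‖ ≤ Kb := (hMb x hx).trans (le_max_left _ _)
      have hrw : Real.exp (σ*‖x‖) * σ * ‖x‖⁻¹ * (inner ℝ x (b x) : ℝ)
          = (σ*Real.exp (σ*‖x‖)) * ((inner ℝ (b x) x : ℝ)/‖x‖) := by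
        rw [real_inner_comm, div_eq_mul_inv]; ring
      rw [hrw]
      calc (σ*Real.exp (σ*‖x‖)) * ((inner ℝ (b x) x : ℝ)/‖x‖)
          ≤ (σ*Real.exp (σ*‖x‖)) * Kb := mul_le_mul_of_nonneg_left hq (by positivity)
        _ = σ*Kb*Real.exp (σ*‖x‖) := by ring
    -- zero-order term
    have hT3 : c x * Real.exp (σ*‖x‖) ≤ Kc * Real.exp (σ*‖x‖) :=
      mul_le_mul_of_nonneg_right ((hMc x).trans (le_max_left _ _)) hEx0.le
    -- integral term
    have hT4 : (∫ z, (Real.exp (σ*‖x+z‖) - Real.exp (σ*‖x‖)) ∂(ν x))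
        ≤ Real.exp (σ*r₀)*Kν*Real.exp (σ*‖x‖) := by
      haveI := H.nu_fin x
      have hC₀0 : 0 < Real.exp (σ*(‖x‖+r₀)) := Real.exp_pos _
      have hae : ∀ᵐ z ∂(ν x), ‖z‖ < r₀ := by
        rw [MeasureTheory.ae_iff]
        have hset : {z : EuclideanSpace ℝ (Fin d) | ¬ ‖z‖ < r₀}
            = (ball (0:EuclideanSpace ℝ (Fin d)) r₀)ᶜ := by
          ext z; simp [mem_ball_zero_iff]
        rw [hset]; exact hr₀ x
      have hbnd : ∀ᵐ z ∂(ν x), ‖Real.exp (σ*‖x+z‖) - Real.exp (σ*‖x‖)‖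
          ≤ Real.exp (σ*(‖x‖+r₀)) := by
        filter_upwards [hae] with z hz
        have h1 : Real.exp (σ*‖x+z‖) ≤ Real.exp (σ*(‖x‖+r₀)) := by
          apply Real.exp_le_exp.mpr
          have := norm_add_le x z
          nlinarith
        have h2 : Real.exp (σ*‖x‖) ≤ Real.exp (σ*(‖x‖+r₀)) := by
          apply Real.exp_le_exp.mpr
          nlinarith
        rw [Real.norm_eq_abs, abs_sub_le_iff]
        constructor <;> nlinarith [Real.exp_pos (σ*‖x+z‖), Real.exp_pos (σ*‖x‖)]
      have hmeas : AEStronglyMeasurable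
          (fun z : EuclideanSpace ℝ (Fin d) => Real.exp (σ*‖x+z‖) - Real.exp (σ*‖x‖)) (ν x) := by
        apply Continuous.aestronglyMeasurable
        exact (Real.continuous_exp.comp
          (continuous_const.mul (continuous_const.add continuous_id).norm)).sub continuous_const
      have hint : Integrable
          (fun z : EuclideanSpace ℝ (Fin d) => Real.exp (σ*‖x+z‖) - Real.exp (σ*‖x‖)) (ν x) :=
        (integrable_const _).mono' hmeas hbnd
      have hmono : (∫ z, (Real.exp (σ*‖x+z‖) - Real.exp (σ*‖x‖)) ∂(ν x))
          ≤ ∫ _z, Real.exp (σ*(‖x‖+r₀)) ∂(ν x) := by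
        apply integral_mono_ae hint (integrable_const _)
        filter_upwards [hbnd] with z hz
        exact le_trans (le_abs_self _) (by rwa [Real.norm_eq_abs] at hz)
      rw [integral_const, smul_eq_mul] at hmono
      have h5 : (ν x).real univ * Real.exp (σ*(‖x‖+r₀))
          ≤ Kν * Real.exp (σ*(‖x‖+r₀)) :=
        mul_le_mul_of_nonneg_right ((hMν x).trans (le_max_left _ _)) hC₀0.le
      have h6 : Kν * Real.exp (σ*(‖x‖+r₀)) = Real.exp (σ*r₀)*Kν*Real.exp (σ*‖x‖) := by
        rw [mul_add, Real.exp_add]; ring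
      linarith
    have hsum : Iop d a b c ν (fun y => Real.exp (σ * ‖y‖)) x
        = (∑ i, ∑ j, a x i j *
          fderiv ℝ (fun y => fderiv ℝ (fun y => Real.exp (σ * ‖y‖)) y
            (EuclideanSpace.single j (1:ℝ))) x (EuclideanSpace.single i (1:ℝ)))
          + fderiv ℝ (fun y => Real.exp (σ * ‖y‖)) x (b x)
          + c x * Real.exp (σ*‖x‖)
          + ∫ z, (Real.exp (σ*‖x+z‖) - Real.exp (σ*‖x‖)) ∂(ν x) := rfl
    rw [hsum]
    have hexpand : ((d:ℝ)^2 * (Ka * (σ*(σ+2))) + σ*Kb + Kc + Real.exp (σ*r₀)*Kν + 1)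
        * Real.exp (σ*‖x‖)
        = (d:ℝ)^2 * (Ka * (σ*(σ+2))) * Real.exp (σ*‖x‖) + σ*Kb*Real.exp (σ*‖x‖)
          + Kc * Real.exp (σ*‖x‖) + Real.exp (σ*r₀)*Kν*Real.exp (σ*‖x‖)
          + Real.exp (σ*‖x‖) := by ring
    rw [hexpand]
    linarith

end
end
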